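/- arXiv:0912.2176 — 8 statements merged into one kernel-verified Lean document; each statement's English description precedes it below -/
import Mathlib

section
/- For every real number Q with 1 < Q ≤ 2 there exists a sequence j : ℕ → ℕ (indexed from 1) with j n ≥ 2 for all n ≥ 1 such that, with I n = ∏_{i=1}^n j i, the sequence log(2^n · I n)/log(I n) converges to Q as n → ∞. That is, every Hausdorff dimension Q ∈ (1,2] is realized by some Laakso space. -/
open Filter

/-- Every `Q ∈ (1,2]` is realized as the Hausdorff dimension
`lim log(2^n I n)/log(I n)` of some Laakso space. -/
theorem laakso_realizes_every_dimension
    (Q : ℝ) (hQ1 : 1 < Q) (hQ2 : Q ≤ 2) :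
    ∃ j : ℕ → ℕ, (∀ n, 1 ≤ n → 2 ≤ j n) ∧
      Tendsto
        (fun n : ℕ =>
          Real.log ((2 : ℝ) ^ n * ((∏ i ∈ Finset.Icc 1 n, j i : ℕ) : ℝ)) /
            Real.log ((∏ i ∈ Finset.Icc 1 n, j i : ℕ) : ℝ))
        atTop (nhds Q) := by
  set a : ℝ := 1 / (Q - 1) with ha_def
  have hQ1' : 0 < Q - 1 := by linarith
  have ha0 : 0 < a := by positivity
  have ha1 : 1 ≤ a := by
    rw [ha_def, le_div_iff₀ hQ1']; linarith
  set f : ℕ → ℕ := fun n => ⌊a * (n : ℝ)⌋₊ with hf_def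
  have hfle : ∀ n : ℕ, n ≤ f n := by
    intro n
    apply Nat.le_floor
    calc ((n : ℕ) : ℝ) = 1 * (n : ℝ) := by push_cast; ring
    _ ≤ a * n := by
        apply mul_le_mul_of_nonneg_right ha1 (Nat.cast_nonneg n)
  have hmono : ∀ n : ℕ, f n + 1 ≤ f (n + 1) := by
    intro n
    apply Nat.le_floor
    push_cast
    have h1 : (f n : ℝ) ≤ a * n := Nat.floor_le (by positivity)
    nlinarith
  have hf0 : f 0 = 0 := by simp [hf_def]
  refine ⟨fun n => 2 ^ (f n - f (n - 1)), ?_, ?_⟩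
  · intro n hn
    obtain ⟨m, rfl⟩ := Nat.exists_eq_add_of_le hn
    have h1 : 1 ≤ f (1 + m) - f (1 + m - 1) := by
      have : f m + 1 ≤ f (m + 1) := hmono m
      simp only [Nat.add_comm 1 m, Nat.add_sub_cancel]
      omega
    calc (2 : ℕ) = 2 ^ 1 := rfl
    _ ≤ 2 ^ (f (1 + m) - f (1 + m - 1)) := Nat.pow_le_pow_right (by norm_num) h1
  · have hprod : ∀ n : ℕ, (∏ i ∈ Finset.Icc 1 n, 2 ^ (f i - f (i - 1))) = 2 ^ f n := by
      intro n
      induction n with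
      | zero => simp [hf0]
      | succ k ih =>
        rw [Finset.prod_Icc_succ_top (Nat.one_le_iff_ne_zero.mpr (Nat.succ_ne_zero k)), ih]
        rw [Nat.add_sub_cancel, ← pow_add]
        congr 1
        have := hmono k
        omega
    have key : ∀ᶠ n : ℕ in atTop,
        Real.log ((2 : ℝ) ^ n *
            ((∏ i ∈ Finset.Icc 1 n, 2 ^ (f i - f (i - 1)) : ℕ) : ℝ)) /
          Real.log ((∏ i ∈ Finset.Icc 1 n, 2 ^ (f i - f (i - 1)) : ℕ) : ℝ)
          = 1 + (n : ℝ) / (f n : ℝ) := by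
      filter_upwards [eventually_ge_atTop 1] with n hn
      have hfn : 1 ≤ f n := le_trans hn (hfle n)
      have hfn' : (0 : ℝ) < (f n : ℝ) := by exact_mod_cast hfn
      rw [hprod n]
      push_cast
      rw [← pow_add, Real.log_pow, Real.log_pow]
      rw [div_eq_iff (by positivity)]
      have hlog2 : (0:ℝ) < Real.log 2 := Real.log_pos (by norm_num)
      have hlog2' : Real.log 2 ≠ 0 := hlog2.ne'
      field_simp
      push_cast; ring
    rw [tendsto_congr' key]
    have hdiv : Tendsto (fun n : ℕ => ((f n : ℝ)) / (n : ℝ)) atTop (nhds a) :=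
      (tendsto_nat_floor_mul_div_atTop ha0.le).comp tendsto_natCast_atTop_atTop
    have hinv : Tendsto (fun n : ℕ => ((f n : ℝ) / (n : ℝ))⁻¹) atTop (nhds a⁻¹) :=
      hdiv.inv₀ ha0.ne'
    have heq : ∀ᶠ n : ℕ in atTop, ((f n : ℝ) / (n : ℝ))⁻¹ = (n : ℝ) / (f n : ℝ) := by
      filter_upwards [eventually_ge_atTop 1] with n hn
      rw [inv_div]
    have h2 : Tendsto (fun n : ℕ => (n : ℝ) / (f n : ℝ)) atTop (nhds a⁻¹) :=
      (tendsto_congr' heq).mp hinv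
    have hQ : 1 + a⁻¹ = Q := by
      rw [ha_def, one_div, inv_inv]; ring
    have := (tendsto_const_nhds (x := (1 : ℝ)) (f := atTop)).add h2
    rwa [hQ] at this
end

section
/- For every real number r ≥ 2 there exists a sequence j : ℕ → ℕ (indexed from 1) with j n ≥ 2 for all n ≥ 1 such that, with I n = ∏_{i=1}^n j i, the sequence (I n)^{1/n} converges to r as n → ∞. -/
open Filter

/-- Greedy partial products: `Lk r n ≈ r ^ n`. -/
noncomputable def Lk (r : ℝ) : ℕ → ℕ
  | 0 => 1
  | n + 1 => Lk r n * max 2 ⌈r ^ (n + 1) / Lk r n⌉₊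

lemma Lk_pos (r : ℝ) : ∀ n, 0 < Lk r n
  | 0 => Nat.one_pos
  | n + 1 => by
    have := Lk_pos r n
    simp only [Lk]
    positivity

lemma Lk_lower (r : ℝ) (hr : 2 ≤ r) : ∀ n, r ^ n ≤ (Lk r n : ℝ)
  | 0 => by simp [Lk]
  | n + 1 => by
    have hc : (0 : ℝ) < (Lk r n : ℝ) := by exact_mod_cast Lk_pos r n
    have hx : r ^ (n + 1) / (Lk r n : ℝ) ≤ ((max 2 ⌈r ^ (n + 1) / Lk r n⌉₊ : ℕ) : ℝ) := by
      calc r ^ (n + 1) / (Lk r n : ℝ) ≤ (⌈r ^ (n + 1) / Lk r n⌉₊ : ℝ) := Nat.le_ceil _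
        _ ≤ _ := by exact_mod_cast Nat.le_max_right 2 _
    have hcx : (Lk r n : ℝ) * (r ^ (n + 1) / (Lk r n : ℝ)) = r ^ (n + 1) := by
      field_simp
    have key := mul_le_mul_of_nonneg_left hx hc.le
    rw [hcx] at key
    rw [Lk]
    exact_mod_cast key

lemma Lk_upper (r : ℝ) (hr : 2 ≤ r) : ∀ n, (Lk r n : ℝ) ≤ 2 * r ^ n
  | 0 => by norm_num [Lk]
  | n + 1 => by
    have hr0 : (0 : ℝ) < r := lt_of_lt_of_le (by norm_num) hr
    have hc : (0 : ℝ) < (Lk r n : ℝ) := by exact_mod_cast Lk_pos r n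
    have hIH : (Lk r n : ℝ) ≤ 2 * r ^ n := Lk_upper r hr n
    set x : ℝ := r ^ (n + 1) / (Lk r n : ℝ) with hxdef
    have hcle : (Lk r n : ℝ) ≤ r ^ (n + 1) := by
      calc (Lk r n : ℝ) ≤ 2 * r ^ n := hIH
        _ ≤ r * r ^ n := by nlinarith [pow_pos hr0 n]
        _ = r ^ (n + 1) := by ring
    have hx1 : (1 : ℝ) ≤ x := (one_le_div hc).2 hcle
    have hx0 : (0 : ℝ) ≤ x := le_trans zero_le_one hx1
    have hmax : ((max 2 ⌈x⌉₊ : ℕ) : ℝ) ≤ x + 1 := by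
      rcases le_or_gt (⌈x⌉₊) 2 with h | h
      · rw [max_eq_left h]; push_cast; linarith
      · rw [max_eq_right h.le]
        exact (Nat.ceil_lt_add_one hx0).le
    have hcx : (Lk r n : ℝ) * x = r ^ (n + 1) := by
      rw [hxdef]; field_simp
    calc ((Lk r (n + 1) : ℕ) : ℝ) = (Lk r n : ℝ) * ((max 2 ⌈x⌉₊ : ℕ) : ℝ) := by
          rw [Lk]; push_cast; ring
      _ ≤ (Lk r n : ℝ) * (x + 1) := mul_le_mul_of_nonneg_left hmax hc.le
      _ = r ^ (n + 1) + (Lk r n : ℝ) := by rw [mul_add, hcx, mul_one]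
      _ ≤ r ^ (n + 1) + 2 * r ^ n := by linarith
      _ ≤ 2 * r ^ (n + 1) := by
          have h2rn : 2 * r ^ n ≤ r ^ (n + 1) := by
            rw [pow_succ]; nlinarith [pow_pos hr0 n]
          linarith

/-- Every real `r ≥ 2` is realized as the contraction ratio
`r = lim (I n)^(1/n)` of some Laakso space. -/
theorem laakso_realizes_every_contraction_ratio
    (r : ℝ) (hr : 2 ≤ r) :
    ∃ j : ℕ → ℕ, (∀ n, 1 ≤ n → 2 ≤ j n) ∧
      Tendsto
        (fun n : ℕ => ((∏ i ∈ Finset.Icc 1 n, j i : ℕ) : ℝ) ^ (1 / (n : ℝ)))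
        atTop (nhds r) := by
  have hr0 : (0 : ℝ) < r := lt_of_lt_of_le (by norm_num) hr
  refine ⟨fun n => max 2 ⌈r ^ n / Lk r (n - 1)⌉₊, fun n _ => le_max_left _ _, ?_⟩
  have hprod : ∀ n : ℕ, (∏ i ∈ Finset.Icc 1 n, max 2 ⌈r ^ i / Lk r (i - 1)⌉₊) = Lk r n := by
    intro n
    induction n with
    | zero => simp [Lk]
    | succ m ih =>
      rw [Finset.prod_Icc_succ_top (Nat.le_add_left 1 m), ih, Nat.add_sub_cancel]
      conv_rhs => rw [Lk]
  simp only [hprod]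
  -- squeeze between r and 2^(1/n) * r
  have h3 : Tendsto (fun n : ℕ => (2 : ℝ) ^ (1 / (n : ℝ)) * r) atTop (nhds r) := by
    have h2 : Tendsto (fun n : ℕ => (2 : ℝ) ^ (1 / (n : ℝ))) atTop (nhds 1) := by
      have hc : ContinuousAt (fun x : ℝ => (2 : ℝ) ^ x) 0 :=
        Real.continuousAt_const_rpow (by norm_num)
      have := hc.tendsto.comp tendsto_one_div_atTop_nhds_zero_nat
      simpa [Real.rpow_zero, Function.comp_def] using this
    have := h2.mul_const r
    simpa using this
  refine tendsto_of_tendsto_of_tendsto_of_le_of_le' tendsto_const_nhds h3 ?_ ?_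
  · filter_upwards [eventually_ge_atTop 1] with n hn
    have hn0 : (n : ℝ) ≠ 0 := by exact_mod_cast Nat.one_le_iff_ne_zero.mp hn
    have hbase : r ^ n ≤ (Lk r n : ℝ) := Lk_lower r hr n
    have key := Real.rpow_le_rpow (pow_nonneg hr0.le n) hbase (by positivity :
      (0:ℝ) ≤ 1 / (n : ℝ))
    rwa [← Real.rpow_natCast r n, ← Real.rpow_mul hr0.le,
      mul_one_div_cancel hn0, Real.rpow_one] at key
  · filter_upwards [eventually_ge_atTop 1] with n hn
    have hn0 : (n : ℝ) ≠ 0 := by exact_mod_cast Nat.one_le_iff_ne_zero.mp hn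
    have hbase : (Lk r n : ℝ) ≤ 2 * r ^ n := Lk_upper r hr n
    have h1 : ((Lk r n : ℕ) : ℝ) ^ (1 / (n : ℝ)) ≤ (2 * r ^ n) ^ (1 / (n : ℝ)) :=
      Real.rpow_le_rpow (by positivity) hbase (by positivity)
    have h2 : (2 * r ^ n : ℝ) ^ (1 / (n : ℝ)) = (2 : ℝ) ^ (1 / (n : ℝ)) * r := by
      rw [Real.mul_rpow (by norm_num) (by positivity), ← Real.rpow_natCast r n,
        ← Real.rpow_mul hr0.le, mul_one_div_cancel hn0, Real.rpow_one]
    rw [h2] at h1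
    exact h1
end

section
/- Let L > 0 and λ ∈ ℝ. There exist functions f₁, f₂, f₃, f₄ : ℝ → ℝ, each twice continuously differentiable on [0, L], not all identically zero on [0, L], satisfying fᵢ''(x) = −λ·fᵢ(x) for all x ∈ [0, L] and i = 1,...,4, together with the Dirichlet conditions fᵢ(0) = 0 at the four outer nodes, the continuity conditions f₁(L) = f₂(L) = f₃(L) = f₄(L), and the Kirchhoff condition f₁'(L) + f₂'(L) + f₃'(L) + f₄'(L) = 0 at the central node, if and only if λ = (k·π/(2L))² for some integer k ≥ 1. -/
open Real Set

private lemma ode_rep (L lam : ℝ) (hL : 0 < L)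
    (S T : ℝ → ℝ)
    (hS : ∀ x, HasDerivAt S (T x) x) (hT : ∀ x, HasDerivAt T (-lam * S x) x)
    (hS0 : S 0 = 0) (hT0 : T 0 = 1)
    (f : ℝ → ℝ) (hf : ContDiffOn ℝ 2 f (Icc 0 L))
    (hode : ∀ x ∈ Icc 0 L, derivWithin (derivWithin f (Icc 0 L)) (Icc 0 L) x = -lam * f x)
    (h0 : f 0 = 0) :
    ∀ x ∈ Icc 0 L, f x = derivWithin f (Icc 0 L) 0 * S x ∧
      derivWithin f (Icc 0 L) x = derivWithin f (Icc 0 L) 0 * T x := by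
  set c := derivWithin f (Icc 0 L) 0 with hc
  set f' := derivWithin f (Icc 0 L) with hf'
  set V : ℝ × ℝ →L[ℝ] ℝ × ℝ :=
    (ContinuousLinearMap.snd ℝ ℝ ℝ).prod ((-lam) • ContinuousLinearMap.fst ℝ ℝ ℝ) with hV
  have hf'CD : ContDiffOn ℝ 1 f' (Icc 0 L) :=
    hf.derivWithin (uniqueDiffOn_Icc hL) (by norm_num)
  have hFcont : ContinuousOn (fun t => (f t, f' t)) (Icc 0 L) :=
    (hf.continuousOn).prodMk hf'CD.continuousOn
  have hIcc_mem : ∀ t ∈ Ico (0:ℝ) L, Icc (0:ℝ) L ∈ nhdsWithin t (Ici t) := by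
    intro t ht
    rw [mem_nhdsWithin]
    exact ⟨Iio L, isOpen_Iio, ht.2, fun y hy => ⟨le_trans ht.1 hy.2, le_of_lt hy.1⟩⟩
  have hF' : ∀ t ∈ Ico (0:ℝ) L,
      HasDerivWithinAt (fun t => (f t, f' t)) (V (f t, f' t)) (Ici t) t := by
    intro t ht
    have htI : t ∈ Icc (0:ℝ) L := ⟨ht.1, le_of_lt ht.2⟩
    have h1 : HasDerivWithinAt f (f' t) (Icc 0 L) t :=
      (hf.differentiableOn (by norm_num) t htI).hasDerivWithinAt
    have h2 : HasDerivWithinAt f' (derivWithin f' (Icc 0 L) t) (Icc 0 L) t :=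
      (hf'CD.differentiableOn (by norm_num) t htI).hasDerivWithinAt
    rw [hode t htI] at h2
    exact ((h1.prodMk h2).mono_of_mem_nhdsWithin (hIcc_mem t ht))
  have hG' : ∀ t : ℝ,
      HasDerivAt (fun t => (c * S t, c * T t)) (V (c * S t, c * T t)) t := by
    intro t
    have h1 := (hS t).const_mul c
    have h2 := (hT t).const_mul c
    have := h1.prodMk h2
    convert this using 2
    · rfl
    show -lam * (c * S t) = c * (-lam * S t)
    ring
  have heq : EqOn (fun t => (f t, f' t)) (fun t => (c * S t, c * T t)) (Icc 0 L) := by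
    apply ODE_solution_unique_of_mem_Icc_right
      (v := fun _ p => V p) (s := fun _ => univ) (K := ‖V‖₊)
      (fun _ _ => V.lipschitz.lipschitzOnWith) hFcont hF' (fun _ _ => mem_univ _)
      (((continuous_const.mul (Differentiable.continuous fun x => (hS x).differentiableAt)).prodMk
        (continuous_const.mul (Differentiable.continuous fun x => (hT x).differentiableAt))).continuousOn)
      (fun t _ => (hG' t).hasDerivWithinAt) (fun _ _ => mem_univ _)
    simp [h0, hS0, hT0, hc, hf']
  intro x hx
  have := heq hx
  simp only [Prod.mk.injEq] at this
  exact this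

private lemma Xsol (L w a : ℝ) (hL : 0 < L) :
    ContDiffOn ℝ 2 (fun y => a * Real.sin (w*y)) (Icc 0 L) ∧
    (∀ x ∈ Icc (0:ℝ) L,
      derivWithin (fun y => a * Real.sin (w*y)) (Icc 0 L) x = a * (Real.cos (w*x) * w)) ∧
    (∀ x ∈ Icc (0:ℝ) L,
      derivWithin (derivWithin (fun y => a * Real.sin (w*y)) (Icc 0 L)) (Icc 0 L) x
        = -(w^2) * (a * Real.sin (w*x))) := by
  have hd1 : ∀ x:ℝ, HasDerivAt (fun y => a * Real.sin (w*y)) (a * (Real.cos (w*x) * w)) x := by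
    intro x
    have := ((Real.hasDerivAt_sin (w*x)).comp x ((hasDerivAt_id x).const_mul w)).const_mul a
    simpa using this
  have hd2 : ∀ x:ℝ, HasDerivAt (fun y => a * (Real.cos (w*y) * w))
      (-(w^2) * (a * Real.sin (w*x))) x := by
    intro x
    have := (((Real.hasDerivAt_cos (w*x)).comp x ((hasDerivAt_id x).const_mul w)).mul_const w).const_mul a
    refine HasDerivAt.congr_deriv this (Eq.symm ?_)
    simp; ring
  have e1 : ∀ x ∈ Icc (0:ℝ) L,
      derivWithin (fun y => a * Real.sin (w*y)) (Icc 0 L) x = a * (Real.cos (w*x) * w) :=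
    fun x hx => (hd1 x).hasDerivWithinAt.derivWithin (uniqueDiffOn_Icc hL x hx)
  refine ⟨?_, e1, ?_⟩
  · exact (contDiff_const.mul (Real.contDiff_sin.comp
      (contDiff_const.mul contDiff_id))).contDiffOn
  · intro x hx
    rw [derivWithin_congr (fun y hy => e1 y hy) (e1 x hx)]
    exact (hd2 x).hasDerivWithinAt.derivWithin (uniqueDiffOn_Icc hL x hx)

private lemma boundary (L lam : ℝ) (hL : 0 < L)
    (S T : ℝ → ℝ)
    (hS : ∀ x, HasDerivAt S (T x) x) (hT : ∀ x, HasDerivAt T (-lam * S x) x)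
    (hS0 : S 0 = 0) (hT0 : T 0 = 1)
    (hexists : ∃ f₁ f₂ f₃ f₄ : ℝ → ℝ,
        ContDiffOn ℝ 2 f₁ (Icc 0 L) ∧ ContDiffOn ℝ 2 f₂ (Icc 0 L) ∧
        ContDiffOn ℝ 2 f₃ (Icc 0 L) ∧ ContDiffOn ℝ 2 f₄ (Icc 0 L) ∧
        ((∃ x ∈ Icc (0 : ℝ) L, f₁ x ≠ 0) ∨ (∃ x ∈ Icc (0 : ℝ) L, f₂ x ≠ 0) ∨
          (∃ x ∈ Icc (0 : ℝ) L, f₃ x ≠ 0) ∨ (∃ x ∈ Icc (0 : ℝ) L, f₄ x ≠ 0)) ∧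
        (∀ x ∈ Icc (0 : ℝ) L,
          derivWithin (derivWithin f₁ (Icc 0 L)) (Icc 0 L) x = -lam * f₁ x) ∧
        (∀ x ∈ Icc (0 : ℝ) L,
          derivWithin (derivWithin f₂ (Icc 0 L)) (Icc 0 L) x = -lam * f₂ x) ∧
        (∀ x ∈ Icc (0 : ℝ) L,
          derivWithin (derivWithin f₃ (Icc 0 L)) (Icc 0 L) x = -lam * f₃ x) ∧
        (∀ x ∈ Icc (0 : ℝ) L,
          derivWithin (derivWithin f₄ (Icc 0 L)) (Icc 0 L) x = -lam * f₄ x) ∧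
        f₁ 0 = 0 ∧ f₂ 0 = 0 ∧ f₃ 0 = 0 ∧ f₄ 0 = 0 ∧
        f₁ L = f₂ L ∧ f₂ L = f₃ L ∧ f₃ L = f₄ L ∧
        derivWithin f₁ (Icc 0 L) L + derivWithin f₂ (Icc 0 L) L +
          derivWithin f₃ (Icc 0 L) L + derivWithin f₄ (Icc 0 L) L = 0) :
    S L = 0 ∨ T L = 0 := by
  obtain ⟨f₁, f₂, f₃, f₄, h₁, h₂, h₃, h₄, hnt, e₁, e₂, e₃, e₄, z₁, z₂, z₃, z₄,
    c₁₂, c₂₃, c₃₄, hK⟩ := hexists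
  have r₁ := ode_rep L lam hL S T hS hT hS0 hT0 f₁ h₁ e₁ z₁
  have r₂ := ode_rep L lam hL S T hS hT hS0 hT0 f₂ h₂ e₂ z₂
  have r₃ := ode_rep L lam hL S T hS hT hS0 hT0 f₃ h₃ e₃ z₃
  have r₄ := ode_rep L lam hL S T hS hT hS0 hT0 f₄ h₄ e₄ z₄
  by_contra h
  push_neg at h
  obtain ⟨hSL, hTL⟩ := h
  have hLm : L ∈ Icc (0:ℝ) L := ⟨le_of_lt hL, le_rfl⟩
  set d₁ := derivWithin f₁ (Icc 0 L) 0
  set d₂ := derivWithin f₂ (Icc 0 L) 0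
  set d₃ := derivWithin f₃ (Icc 0 L) 0
  set d₄ := derivWithin f₄ (Icc 0 L) 0
  have hK' : (d₁ + d₂ + d₃ + d₄) * T L = 0 := by
    rw [(r₁ L hLm).2, (r₂ L hLm).2, (r₃ L hLm).2, (r₄ L hLm).2] at hK
    linarith [hK]
  have hsum : d₁ + d₂ + d₃ + d₄ = 0 := by
    rcases mul_eq_zero.1 hK' with h | h
    · exact h
    · exact absurd h hTL
  have h12 : d₁ = d₂ := by
    have := c₁₂; rw [(r₁ L hLm).1, (r₂ L hLm).1] at this
    exact mul_right_cancel₀ hSL this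
  have h23 : d₂ = d₃ := by
    have := c₂₃; rw [(r₂ L hLm).1, (r₃ L hLm).1] at this
    exact mul_right_cancel₀ hSL this
  have h34 : d₃ = d₄ := by
    have := c₃₄; rw [(r₃ L hLm).1, (r₄ L hLm).1] at this
    exact mul_right_cancel₀ hSL this
  have hd1 : d₁ = 0 := by linarith
  have hall : d₁ = 0 ∧ d₂ = 0 ∧ d₃ = 0 ∧ d₄ = 0 := ⟨hd1, by linarith, by linarith, by linarith⟩
  rcases hnt with ⟨x, hx, hne⟩ | ⟨x, hx, hne⟩ | ⟨x, hx, hne⟩ | ⟨x, hx, hne⟩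
  · exact hne (by rw [(r₁ x hx).1, hall.1, zero_mul])
  · exact hne (by rw [(r₂ x hx).1, hall.2.1, zero_mul])
  · exact hne (by rw [(r₃ x hx).1, hall.2.2.1, zero_mul])
  · exact hne (by rw [(r₄ x hx).1, hall.2.2.2, zero_mul])

/-- Eigenvalues of the Laplacian on the 'X' quantum graph (four edges of length `L` meeting
at a central node, Dirichlet conditions at the four outer nodes, continuity and Kirchhoff
matching at the center) are exactly `(kπ/(2L))²`, `k ≥ 1`. -/
theorem X_shape_dirichlet_eigenvalues (L : ℝ) (hL : 0 < L) (lam : ℝ) :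
    (∃ f₁ f₂ f₃ f₄ : ℝ → ℝ,
        ContDiffOn ℝ 2 f₁ (Icc 0 L) ∧ ContDiffOn ℝ 2 f₂ (Icc 0 L) ∧
        ContDiffOn ℝ 2 f₃ (Icc 0 L) ∧ ContDiffOn ℝ 2 f₄ (Icc 0 L) ∧
        ((∃ x ∈ Icc (0 : ℝ) L, f₁ x ≠ 0) ∨ (∃ x ∈ Icc (0 : ℝ) L, f₂ x ≠ 0) ∨
          (∃ x ∈ Icc (0 : ℝ) L, f₃ x ≠ 0) ∨ (∃ x ∈ Icc (0 : ℝ) L, f₄ x ≠ 0)) ∧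
        (∀ x ∈ Icc (0 : ℝ) L,
          derivWithin (derivWithin f₁ (Icc 0 L)) (Icc 0 L) x = -lam * f₁ x) ∧
        (∀ x ∈ Icc (0 : ℝ) L,
          derivWithin (derivWithin f₂ (Icc 0 L)) (Icc 0 L) x = -lam * f₂ x) ∧
        (∀ x ∈ Icc (0 : ℝ) L,
          derivWithin (derivWithin f₃ (Icc 0 L)) (Icc 0 L) x = -lam * f₃ x) ∧
        (∀ x ∈ Icc (0 : ℝ) L,
          derivWithin (derivWithin f₄ (Icc 0 L)) (Icc 0 L) x = -lam * f₄ x) ∧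
        f₁ 0 = 0 ∧ f₂ 0 = 0 ∧ f₃ 0 = 0 ∧ f₄ 0 = 0 ∧
        f₁ L = f₂ L ∧ f₂ L = f₃ L ∧ f₃ L = f₄ L ∧
        derivWithin f₁ (Icc 0 L) L + derivWithin f₂ (Icc 0 L) L +
          derivWithin f₃ (Icc 0 L) L + derivWithin f₄ (Icc 0 L) L = 0) ↔
      ∃ k : ℕ, 1 ≤ k ∧ lam = ((k : ℝ) * π / (2 * L)) ^ 2 := by
  constructor
  · intro hexists
    rcases lt_trichotomy lam 0 with hneg | hzero | hpos
    · -- lam < 0 : impossible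
      exfalso
      set w := Real.sqrt (-lam) with hw
      have hwpos : 0 < w := Real.sqrt_pos.2 (by linarith)
      have hw2 : w^2 = -lam := Real.sq_sqrt (by linarith)
      have hS : ∀ x:ℝ, HasDerivAt (fun y => Real.sinh (w*y) / w) (Real.cosh (w*x)) x := by
        intro x
        have := ((Real.hasDerivAt_sinh (w*x)).comp x ((hasDerivAt_id x).const_mul w)).div_const w
        refine HasDerivAt.congr_deriv this (Eq.symm ?_)
        field_simp
      have hT : ∀ x:ℝ, HasDerivAt (fun y => Real.cosh (w*y))
          (-lam * (Real.sinh (w*x) / w)) x := by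
        intro x
        have := (Real.hasDerivAt_cosh (w*x)).comp x ((hasDerivAt_id x).const_mul w)
        refine HasDerivAt.congr_deriv this (Eq.symm ?_)
        rw [← hw2]; field_simp
      have hb := boundary L lam hL _ _ hS hT (by simp) (by simp) hexists
      rcases hb with h | h
      · have : Real.sinh (w*L) > 0 := Real.sinh_pos_iff.2 (by positivity)
        rw [div_eq_zero_iff] at h
        rcases h with h | h <;> linarith
      · linarith [Real.cosh_pos (x := w*L), h]
    · -- lam = 0 : impossible
      exfalso
      subst hzero
      have hS : ∀ x:ℝ, HasDerivAt (fun y : ℝ => y) ((fun _ : ℝ => (1:ℝ)) x) x :=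
        fun x => hasDerivAt_id x
      have hT : ∀ x:ℝ, HasDerivAt (fun _ : ℝ => (1:ℝ)) (-(0:ℝ) * x) x := by
        intro x
        simpa using (hasDerivAt_const x (1:ℝ))
      have hb := boundary L 0 hL _ _ hS hT rfl rfl hexists
      rcases hb with h | h
      · linarith
      · norm_num at h
    · -- lam > 0
      set w := Real.sqrt lam with hw
      have hwpos : 0 < w := Real.sqrt_pos.2 hpos
      have hw2 : w^2 = lam := Real.sq_sqrt hpos.le
      have hS : ∀ x:ℝ, HasDerivAt (fun y => Real.sin (w*y) / w) (Real.cos (w*x)) x := by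
        intro x
        have := ((Real.hasDerivAt_sin (w*x)).comp x ((hasDerivAt_id x).const_mul w)).div_const w
        refine HasDerivAt.congr_deriv this (Eq.symm ?_)
        field_simp
      have hT : ∀ x:ℝ, HasDerivAt (fun y => Real.cos (w*y))
          (-lam * (Real.sin (w*x) / w)) x := by
        intro x
        have := (Real.hasDerivAt_cos (w*x)).comp x ((hasDerivAt_id x).const_mul w)
        refine HasDerivAt.congr_deriv this (Eq.symm ?_)
        rw [← hw2]; field_simp
      have hb := boundary L lam hL _ _ hS hT (by simp) (by simp) hexists
      have hsincos : Real.sin (2 * (w * L)) = 0 := by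
        rw [Real.sin_two_mul]
        rcases hb with h | h
        · rw [div_eq_zero_iff] at h
          rcases h with h | h
          · rw [h]; ring
          · exact absurd h (ne_of_gt hwpos)
        · rw [h]; ring
      obtain ⟨n, hn⟩ := Real.sin_eq_zero_iff.1 hsincos
      have hnpos : 0 < n := by
        by_contra hn'
        push_neg at hn'
        have : (n:ℝ) * π ≤ 0 :=
          mul_nonpos_iff.2 (Or.inr ⟨by exact_mod_cast hn', Real.pi_pos.le⟩)
        nlinarith [Real.pi_pos, mul_pos hwpos hL]
      refine ⟨n.toNat, by omega, ?_⟩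
      have hcast : ((n.toNat : ℝ)) = (n : ℝ) := by
        exact_mod_cast Int.toNat_of_nonneg hnpos.le
      rw [hcast]
      have hwval : w = (n:ℝ) * π / (2 * L) := by
        field_simp at hn ⊢
        linarith [hn]
      rw [← hw2, hwval]
  · rintro ⟨k, hk, rfl⟩
    set w := (k:ℝ) * π / (2 * L) with hwdef
    have hkpos : (0:ℝ) < k := by exact_mod_cast hk
    have hwpos : 0 < w := by
      apply div_pos (mul_pos hkpos Real.pi_pos) (by linarith)
    have hXa := Xsol L w 1 hL
    have hXb := Xsol L w (-1) hL
    have hX0 := Xsol L w 0 hL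
    -- nontriviality point
    have hnt : ∃ x ∈ Icc (0:ℝ) L, (1:ℝ) * Real.sin (w*x) ≠ 0 := by
      refine ⟨L / k, ⟨by positivity, div_le_self hL.le (by exact_mod_cast hk)⟩, ?_⟩
      have : w * (L / k) = π / 2 := by
        rw [hwdef]
        field_simp
      rw [this]
      simp
    have hwL : w * L = (k:ℝ) * (π/2) := by
      rw [hwdef]; field_simp
    rcases Nat.even_or_odd k with ⟨m, hm⟩ | ⟨m, hm⟩
    · -- k even: sin(wL) = 0 ; use f₁ = sin, f₂ = -sin, f₃ = f₄ = 0
      have hsinL : Real.sin (w * L) = 0 := by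
        rw [hwL]
        apply Real.sin_eq_zero_iff.2
        refine ⟨m, ?_⟩
        have : (k:ℝ) = 2*m := by push_cast [hm]; ring
        rw [this]; push_cast; ring
      refine ⟨fun y => 1 * Real.sin (w*y), fun y => (-1) * Real.sin (w*y),
        fun y => 0 * Real.sin (w*y), fun y => 0 * Real.sin (w*y),
        hXa.1, hXb.1, hX0.1, hX0.1, Or.inl hnt, ?_, ?_, ?_, ?_,
        by simp, by simp, by simp, by simp, ?_, ?_, ?_, ?_⟩
      · intro x hx; exact hXa.2.2 x hx
      · intro x hx; exact hXb.2.2 x hx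
      · intro x hx; exact hX0.2.2 x hx
      · intro x hx; exact hX0.2.2 x hx
      · simp [hsinL]
      · simp [hsinL]
      · simp [hsinL]
      · have hLm : L ∈ Icc (0:ℝ) L := ⟨hL.le, le_rfl⟩
        rw [hXa.2.1 L hLm, hXb.2.1 L hLm, hX0.2.1 L hLm]
        ring
    · -- k odd: cos(wL) = 0 ; use all four equal sin
      have hcosL : Real.cos (w * L) = 0 := by
        rw [hwL]
        apply Real.cos_eq_zero_iff.2
        refine ⟨m, ?_⟩
        have : (k:ℝ) = 2*m+1 := by exact_mod_cast hm
        rw [this]; push_cast; ring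
      refine ⟨fun y => 1 * Real.sin (w*y), fun y => 1 * Real.sin (w*y),
        fun y => 1 * Real.sin (w*y), fun y => 1 * Real.sin (w*y),
        hXa.1, hXa.1, hXa.1, hXa.1, Or.inl hnt, ?_, ?_, ?_, ?_,
        by simp, by simp, by simp, by simp, rfl, rfl, rfl, ?_⟩
      · intro x hx; exact hXa.2.2 x hx
      · intro x hx; exact hXa.2.2 x hx
      · intro x hx; exact hXa.2.2 x hx
      · intro x hx; exact hXa.2.2 x hx
      · have hLm : L ∈ Icc (0:ℝ) L := ⟨hL.le, le_rfl⟩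
        rw [hXa.2.1 L hLm, hcosL]
        ring
end

section
/- Let j : ℕ → ℕ (indexed from 1) satisfy j n ≥ 2 for all n ≥ 1, set I n = ∏_{i=1}^n j i, and let s ∈ ℂ with Re(s) > 1. Then the family of terms (multiplicity)·λ^{−s}, where λ ranges over the nonzero eigenvalues k²π² (k ≥ 1, multiplicity 1), (k+1/2)²π²(I n)² (k ≥ 0, n ≥ 1, multiplicity 2^n), k²π²(I n)² (k ≥ 1, n ≥ 1, multiplicity 2^{n−1}(j n − 2)·I(n−1)), k²π²(I n)² (k ≥ 1, n ≥ 2, multiplicity 2^{n−1}(I(n−1) − 1)), and k²π²(I n)²/4 (k ≥ 1, n ≥ 2, multiplicity 2^{n−2}(I(n−1) − 1)), is absolutely summable. -/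
open Real

set_option maxHeartbeats 1000000

/-- For `Re s > 1`, the family `(multiplicity)·λ^(−s)` over the nonzero eigenvalues of the
Laplacian on a Laakso space is absolutely summable. -/
theorem laakso_zeta_absolutely_summable
    (j : ℕ → ℕ) (hj : ∀ n, 1 ≤ n → 2 ≤ j n)
    (I : ℕ → ℕ) (hI : ∀ n, I n = ∏ i ∈ Finset.Icc 1 n, j i)
    (s : ℂ) (hs : 1 < s.re) :
    Summable (fun k : ℕ =>
      ‖((((k : ℝ) + 1) ^ 2 * π ^ 2 : ℝ) : ℂ) ^ (-s)‖) ∧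
    Summable (fun p : ℕ × ℕ =>
      ‖(2 : ℂ) ^ (p.1 + 1) *
        (((((p.2 : ℝ) + 1 / 2) ^ 2 * π ^ 2 * (I (p.1 + 1) : ℝ) ^ 2 : ℝ) : ℂ) ^ (-s))‖) ∧
    Summable (fun p : ℕ × ℕ =>
      ‖((2 ^ p.1 * (j (p.1 + 1) - 2) * I p.1 : ℕ) : ℂ) *
        (((((p.2 : ℝ) + 1) ^ 2 * π ^ 2 * (I (p.1 + 1) : ℝ) ^ 2 : ℝ) : ℂ) ^ (-s))‖) ∧
    Summable (fun p : ℕ × ℕ =>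
      ‖((2 ^ (p.1 + 1) * (I (p.1 + 1) - 1) : ℕ) : ℂ) *
        (((((p.2 : ℝ) + 1) ^ 2 * π ^ 2 * (I (p.1 + 2) : ℝ) ^ 2 : ℝ) : ℂ) ^ (-s))‖) ∧
    Summable (fun p : ℕ × ℕ =>
      ‖((2 ^ p.1 * (I (p.1 + 1) - 1) : ℕ) : ℂ) *
        (((((p.2 : ℝ) + 1) ^ 2 * π ^ 2 * (I (p.1 + 2) : ℝ) ^ 2 / 4 : ℝ) : ℂ) ^ (-s))‖) := by
  set σ := s.re with hσdef
  have hσ : 1 < σ := hs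
  have hπ : (0:ℝ) < π := Real.pi_pos
  have hπ1 : (1:ℝ) ≤ π ^ 2 := by nlinarith [Real.pi_gt_three]
  -- basic facts about I
  have hI0 : I 0 = 1 := by rw [hI]; simp
  have hIsucc : ∀ n, I (n+1) = I n * j (n+1) := by
    intro n
    rw [hI, hI, Finset.prod_Icc_succ_top (Nat.le_add_left 1 n)]
  have hIge : ∀ n, 2 ^ n ≤ I n := by
    intro n
    induction n with
    | zero => simp [hI0]
    | succ n ih =>
      rw [hIsucc, pow_succ]
      exact Nat.mul_le_mul ih (hj (n+1) (Nat.le_add_left 1 n))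
  have hIpos : ∀ n, 0 < I n := fun n => lt_of_lt_of_le (Nat.pow_pos (by norm_num)) (hIge n)
  have hIgeR : ∀ n, (2:ℝ) ^ n ≤ (I n : ℝ) := by
    intro n; exact_mod_cast hIge n
  have hIposR : ∀ n, (0:ℝ) < (I n : ℝ) := fun n => by exact_mod_cast hIpos n
  -- norm of complex power of positive real
  have hnorm : ∀ x : ℝ, 0 < x → ‖((x : ℝ) : ℂ) ^ (-s)‖ = x ^ (-σ) := by
    intro x hx
    rw [Complex.norm_cpow_eq_rpow_re_of_pos hx, Complex.neg_re, hσdef]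
  -- squares as rpow
  have hsq : ∀ x : ℝ, 0 ≤ x → (x ^ 2) ^ (-σ) = x ^ (-(2*σ)) := by
    intro x hx
    rw [← Real.rpow_natCast x 2, ← Real.rpow_mul hx]
    congr 1
    push_cast
    ring
  -- summability in k
  have hgsum : ∀ c : ℝ, 0 < c → c ≤ 1 →
      Summable (fun k : ℕ => (((k:ℝ) + c) ^ 2) ^ (-σ)) := by
    intro c hc hc1
    have h2σ : (-(2*σ) : ℝ) < -1 := by linarith
    have base : Summable (fun n : ℕ => (n:ℝ) ^ (-(2*σ))) := Real.summable_nat_rpow.mpr h2σ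
    have base1 : Summable (fun k : ℕ => ((k:ℝ) + 1) ^ (-(2*σ))) := by
      have := (summable_nat_add_iff 1).mpr base
      apply this.congr
      intro k
      push_cast
      ring_nf
    have hb : Summable (fun k : ℕ => c ^ (-(2*σ)) * ((k:ℝ) + 1) ^ (-(2*σ))) :=
      base1.mul_left _
    apply hb.of_nonneg_of_le (fun k => Real.rpow_nonneg (sq_nonneg _) _)
    intro k
    have hk0 : (0:ℝ) ≤ (k:ℝ) := Nat.cast_nonneg k
    have hkc : (0:ℝ) < (k:ℝ) + c := by linarith
    rw [hsq _ hkc.le, ← Real.mul_rpow hc.le (by linarith : (0:ℝ) ≤ (k:ℝ) + 1)]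
    apply Real.rpow_le_rpow_of_nonpos (by nlinarith) (by nlinarith) (by linarith)
  -- geometric ratio
  set r : ℝ := (2:ℝ) ^ ((2:ℝ) - 2*σ) with hrdef
  have hr0 : 0 < r := Real.rpow_pos_of_pos two_pos _
  have hr1 : r < 1 := Real.rpow_lt_one_of_one_lt_of_neg one_lt_two (by linarith)
  have hgeom : Summable (fun n : ℕ => r ^ n) := summable_geometric_of_lt_one hr0.le hr1
  -- key estimate: multiplicity times (I b ^ 2)^(-σ)
  have hkey : ∀ (a b n : ℕ) (M : ℝ), M ≤ 2 ^ a * (I b : ℝ) →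
      (a:ℝ) + ((1:ℝ) - 2*σ) * (b:ℝ) ≤ ((2:ℝ) - 2*σ) * (n:ℝ) →
      M * (((I b : ℝ)) ^ 2) ^ (-σ) ≤ r ^ n := by
    intro a b n M hM hexp
    have hIb := hIposR b
    have hC : (0:ℝ) ≤ ((I b : ℝ)) ^ 2 := sq_nonneg _
    rw [hsq _ hIb.le]
    have hCn : (0:ℝ) ≤ (I b : ℝ) ^ (-(2*σ)) := Real.rpow_nonneg hIb.le _
    have step1 : M * (I b : ℝ) ^ (-(2*σ)) ≤ (2 ^ a * (I b : ℝ)) * (I b : ℝ) ^ (-(2*σ)) :=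
      mul_le_mul_of_nonneg_right hM hCn
    have step2 : (2:ℝ) ^ a * (I b : ℝ) * (I b : ℝ) ^ (-(2*σ))
        = 2 ^ a * (I b : ℝ) ^ ((1:ℝ) - 2*σ) := by
      rw [mul_assoc]
      congr 1
      nth_rewrite 1 [← Real.rpow_one ((I b : ℝ))]
      rw [← Real.rpow_add hIb]
      ring_nf
    have step3 : (I b : ℝ) ^ ((1:ℝ) - 2*σ) ≤ ((2:ℝ) ^ b) ^ ((1:ℝ) - 2*σ) :=
      Real.rpow_le_rpow_of_nonpos (pow_pos two_pos b) (hIgeR b) (by linarith)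
    have step4 : (2:ℝ) ^ a * ((2:ℝ) ^ b) ^ ((1:ℝ) - 2*σ) ≤ r ^ n := by
      rw [← Real.rpow_natCast (2:ℝ) a, ← Real.rpow_natCast (2:ℝ) b,
        ← Real.rpow_mul (by norm_num : (0:ℝ) ≤ 2), ← Real.rpow_add two_pos,
        hrdef, ← Real.rpow_natCast ((2:ℝ) ^ ((2:ℝ) - 2*σ)) n,
        ← Real.rpow_mul (by norm_num : (0:ℝ) ≤ 2)]
      apply Real.rpow_le_rpow_of_exponent_le one_le_two
      nlinarith [hexp]
    calc M * (I b : ℝ) ^ (-(2*σ)) ≤ (2 ^ a * (I b : ℝ)) * (I b : ℝ) ^ (-(2*σ)) := step1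
      _ = 2 ^ a * (I b : ℝ) ^ ((1:ℝ) - 2*σ) := step2
      _ ≤ 2 ^ a * ((2:ℝ) ^ b) ^ ((1:ℝ) - 2*σ) :=
          mul_le_mul_of_nonneg_left step3 (by positivity)
      _ ≤ r ^ n := step4
  have hxpos : ∀ (c : ℝ), 0 < c → ∀ (k b : ℕ),
      (0:ℝ) < ((k:ℝ) + c) ^ 2 * π ^ 2 * (I b : ℝ) ^ 2 := by
    intro c hc k b
    have hb := hIposR b
    positivity
  -- the combined pointwise estimate
  have hmain : ∀ (a b n k : ℕ) (c M : ℝ), 0 ≤ M → 0 < c →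
      M ≤ 2 ^ a * (I b : ℝ) →
      (a:ℝ) + ((1:ℝ) - 2*σ) * (b:ℝ) ≤ ((2:ℝ) - 2*σ) * (n:ℝ) →
      M * ((((k:ℝ) + c) ^ 2 * π ^ 2 * (I b : ℝ) ^ 2) ^ (-σ))
        ≤ r ^ n * (((k:ℝ) + c) ^ 2) ^ (-σ) := by
    intro a b n k c M hM0 hc hM hexp
    have hk : (0:ℝ) < (k:ℝ) + c := by positivity
    rw [Real.mul_rpow (by positivity) (sq_nonneg _),
      Real.mul_rpow (sq_nonneg _) (sq_nonneg _)]
    have hA : (0:ℝ) ≤ (((k:ℝ) + c) ^ 2) ^ (-σ) := Real.rpow_nonneg (sq_nonneg _) _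
    have hB : (π ^ 2 : ℝ) ^ (-σ) ≤ 1 :=
      Real.rpow_le_one_of_one_le_of_nonpos hπ1 (by linarith)
    have hB0 : (0:ℝ) ≤ (π ^ 2 : ℝ) ^ (-σ) := Real.rpow_nonneg (sq_nonneg _) _
    have hMC : M * (((I b : ℝ)) ^ 2) ^ (-σ) ≤ r ^ n := hkey a b n M hM hexp
    have hMC0 : (0:ℝ) ≤ M * (((I b : ℝ)) ^ 2) ^ (-σ) :=
      mul_nonneg hM0 (Real.rpow_nonneg (sq_nonneg _) _)
    have h1 : (M * (((I b : ℝ)) ^ 2) ^ (-σ)) * ((π ^ 2 : ℝ) ^ (-σ)) ≤ r ^ n * 1 :=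
      mul_le_mul hMC hB hB0 (pow_nonneg hr0.le n)
    have h2 := mul_le_mul_of_nonneg_right h1 hA
    calc M * ((((k:ℝ) + c) ^ 2) ^ (-σ) * (π ^ 2 : ℝ) ^ (-σ) * (((I b : ℝ)) ^ 2) ^ (-σ))
        = (M * (((I b : ℝ)) ^ 2) ^ (-σ)) * ((π ^ 2 : ℝ) ^ (-σ)) * (((k:ℝ) + c) ^ 2) ^ (-σ) := by
          ring
      _ ≤ r ^ n * 1 * (((k:ℝ) + c) ^ 2) ^ (-σ) := h2
      _ = r ^ n * (((k:ℝ) + c) ^ 2) ^ (-σ) := by ring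
  -- comparison functions are summable
  have hGsum : ∀ c : ℝ, 0 < c → c ≤ 1 →
      Summable (fun p : ℕ × ℕ => r ^ p.1 * (((p.2:ℝ) + c) ^ 2) ^ (-σ)) := by
    intro c hc hc1
    exact Summable.mul_of_nonneg hgeom (hgsum c hc hc1)
      (fun n => pow_nonneg hr0.le n)
      (fun k => Real.rpow_nonneg (sq_nonneg _) _)
  refine ⟨?_, ?_, ?_, ?_, ?_⟩
  · -- family 1
    apply Summable.congr (((hgsum 1 one_pos le_rfl).mul_right ((π ^ 2 : ℝ) ^ (-σ))))
    intro k
    rw [hnorm _ (by positivity), Real.mul_rpow (sq_nonneg _) (sq_nonneg _)]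
  · -- family 2
    apply (hGsum (1/2) (by norm_num) (by norm_num)).of_nonneg_of_le
      (fun p => norm_nonneg _)
    rintro ⟨n, k⟩
    have h2 : ‖(2:ℂ) ^ (n+1)‖ = (2:ℝ) ^ (n+1) := by
      simp
    rw [norm_mul, h2, hnorm _ (hxpos (1/2) (by norm_num) k (n+1))]
    refine hmain n (n+1) n k (1/2) _ ?_ (by norm_num) ?_ ?_
    · positivity
    · have h2I : (2:ℕ) ≤ I (n+1) := by
        calc (2:ℕ) = 2 ^ 1 := (pow_one 2).symm
          _ ≤ 2 ^ (n+1) := Nat.pow_le_pow_right (by norm_num) (by omega)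
          _ ≤ I (n+1) := hIge _
      have hmnat : (2:ℕ) ^ (n+1) ≤ 2 ^ n * I (n+1) := by
        rw [pow_succ]; exact Nat.mul_le_mul_left _ h2I
      exact_mod_cast hmnat
    · push_cast; nlinarith
  · -- family 3
    apply (hGsum 1 one_pos le_rfl).of_nonneg_of_le (fun p => norm_nonneg _)
    rintro ⟨n, k⟩
    rw [norm_mul, Complex.norm_natCast, hnorm _ (hxpos 1 one_pos k (n+1))]
    refine hmain n (n+1) n k 1 _ ?_ one_pos ?_ ?_
    · positivity
    · have hmnat : 2 ^ n * (j (n+1) - 2) * I n ≤ 2 ^ n * I (n+1) := by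
        rw [hIsucc]
        calc 2 ^ n * (j (n+1) - 2) * I n ≤ 2 ^ n * j (n+1) * I n := by
              gcongr
              exact Nat.sub_le _ _
          _ = 2 ^ n * (I n * j (n+1)) := by ring
      exact_mod_cast hmnat
    · push_cast; nlinarith
  · -- family 4
    apply (hGsum 1 one_pos le_rfl).of_nonneg_of_le (fun p => norm_nonneg _)
    rintro ⟨n, k⟩
    rw [norm_mul, Complex.norm_natCast, hnorm _ (hxpos 1 one_pos k (n+2))]
    refine hmain (n+1) (n+2) n k 1 _ ?_ one_pos ?_ ?_
    · positivity
    · have hmnat : 2 ^ (n+1) * (I (n+1) - 1) ≤ 2 ^ (n+1) * I (n+2) := by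
        gcongr
        calc I (n+1) - 1 ≤ I (n+1) := Nat.sub_le _ _
          _ ≤ I (n+1) * j (n+2) := Nat.le_mul_of_pos_right _
              (lt_of_lt_of_le one_pos (le_trans (by norm_num) (hj (n+2) (by omega))))
          _ = I (n+2) := (hIsucc (n+1)).symm
      exact_mod_cast hmnat
    · push_cast; nlinarith
  · -- family 5
    have hGsum5 : Summable (fun p : ℕ × ℕ =>
        (4:ℝ) ^ σ * (r ^ p.1 * (((p.2:ℝ) + 1) ^ 2) ^ (-σ))) :=
      (hGsum 1 one_pos le_rfl).mul_left _
    apply hGsum5.of_nonneg_of_le (fun p => norm_nonneg _)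
    rintro ⟨n, k⟩
    have hb2 := hIposR (n+2)
    rw [norm_mul, Complex.norm_natCast, hnorm _ (by positivity)]
    have hdiv : (((k:ℝ) + 1) ^ 2 * π ^ 2 * (I (n+2) : ℝ) ^ 2 / 4) ^ (-σ)
        = (4:ℝ) ^ σ * (((k:ℝ) + 1) ^ 2 * π ^ 2 * (I (n+2) : ℝ) ^ 2) ^ (-σ) := by
      rw [Real.div_rpow (by positivity) (by norm_num), Real.rpow_neg (by norm_num : (0:ℝ) ≤ 4)]
      field_simp
    rw [hdiv]
    have h4 : (0:ℝ) < (4:ℝ) ^ σ := Real.rpow_pos_of_pos (by norm_num) _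
    have hstep : ((2 ^ n * (I (n+1) - 1) : ℕ) : ℝ)
        * (((k:ℝ) + 1) ^ 2 * π ^ 2 * (I (n+2) : ℝ) ^ 2) ^ (-σ)
        ≤ r ^ n * (((k:ℝ) + 1) ^ 2) ^ (-σ) := by
      refine hmain n (n+2) n k 1 _ ?_ one_pos ?_ ?_
      · positivity
      · have hmnat : 2 ^ n * (I (n+1) - 1) ≤ 2 ^ n * I (n+2) := by
          gcongr
          calc I (n+1) - 1 ≤ I (n+1) := Nat.sub_le _ _
            _ ≤ I (n+1) * j (n+2) := Nat.le_mul_of_pos_right _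
                (lt_of_lt_of_le one_pos (le_trans (by norm_num) (hj (n+2) (by omega))))
            _ = I (n+2) := (hIsucc (n+1)).symm
        exact_mod_cast hmnat
      · push_cast; nlinarith
    calc ((2 ^ n * (I (n+1) - 1) : ℕ) : ℝ)
        * ((4:ℝ) ^ σ * (((k:ℝ) + 1) ^ 2 * π ^ 2 * (I (n+2) : ℝ) ^ 2) ^ (-σ))
        = (4:ℝ) ^ σ * (((2 ^ n * (I (n+1) - 1) : ℕ) : ℝ)
          * (((k:ℝ) + 1) ^ 2 * π ^ 2 * (I (n+2) : ℝ) ^ 2) ^ (-σ)) := by ring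
      _ ≤ (4:ℝ) ^ σ * (r ^ n * (((k:ℝ) + 1) ^ 2) ^ (-σ)) :=
          mul_le_mul_of_nonneg_left hstep h4.le
end

section
/- Let j : ℕ → ℕ (indexed from 1) satisfy j n ≥ 2 for all n ≥ 1, set I n = ∏_{i=1}^n j i, and let s ∈ ℂ with Re(s) > 1. Then Σ_{k≥1} (k²π²)^{−s} + Σ_{n≥1} 2^n Σ_{k≥0} ((k+1/2)²π²(I n)²)^{−s} + Σ_{n≥1} 2^{n−1}(j n − 2)·I(n−1) Σ_{k≥1} (k²π²(I n)²)^{−s} + Σ_{n≥2} 2^{n−1}(I(n−1) − 1) Σ_{k≥1} (k²π²(I n)²)^{−s} + Σ_{n≥2} 2^{n−2}(I(n−1) − 1) Σ_{k≥1} (k²π²(I n)²/4)^{−s} = (ζ(2s)/π^{2s}) · [ Σ_{n≥2} (2^{n−1}·I(n−1)·(2^{2s−1} + j n − 1) + 2^{n−1}·((3/2)·2^{2s} − 3)) / (I n)^{2s} + (2^{2s+1} − 4 + j 1)/(j 1)^{2s} + 1 ], where ζ denotes the Riemann zeta function and all complex powers are principal. -/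
set_option maxHeartbeats 1000000
open Real

lemma LZ.cpow_mul_split {x y : ℝ} (hx : 0 ≤ x) (hy : 0 ≤ y) (t : ℂ) :
    ((x * y : ℝ) : ℂ) ^ t = ((x:ℝ):ℂ) ^ t * ((y:ℝ):ℂ) ^ t := by
  push_cast
  exact Complex.mul_cpow_ofReal_nonneg hx hy t

lemma LZ.cpow_sq {x : ℝ} (hx : 0 < x) (t : ℂ) :
    ((x ^ 2 : ℝ) : ℂ) ^ t = ((x:ℝ):ℂ) ^ (2 * t) := by
  have : (x ^ 2 : ℝ) = x * x := sq x
  rw [this, LZ.cpow_mul_split hx.le hx.le, ← Complex.cpow_add _ _ (by exact_mod_cast hx.ne'),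
    two_mul]

lemma LZ.two_cpow_ne {w : ℂ} : (2:ℂ) ^ w ≠ 0 := by
  simp [Complex.cpow_eq_zero_iff]

lemma LZ.half_cpow (w : ℂ) : ((1/2 : ℝ):ℂ) ^ (-w) = (2:ℂ) ^ w := by
  have harg : ((2:ℝ):ℂ).arg ≠ π := by
    rw [Complex.arg_ofReal_of_nonneg (by norm_num)]
    exact fun h => Real.pi_ne_zero h.symm
  have : ((1/2 : ℝ):ℂ) = ((2:ℝ):ℂ)⁻¹ := by push_cast; ring
  rw [this, Complex.inv_cpow _ _ harg, Complex.cpow_neg, inv_inv]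
  norm_num

lemma LZ.zsum {w : ℂ} (hw : 1 < w.re) :
    ∑' k : ℕ, ((k : ℂ) + 1) ^ (-w) = riemannZeta w := by
  rw [zeta_eq_tsum_one_div_nat_add_one_cpow hw]
  exact tsum_congr fun k => by rw [Complex.cpow_neg, one_div]

lemma LZ.summable_shift {w : ℂ} (hw : 1 < w.re) :
    Summable (fun k : ℕ => ((k : ℂ) + 1) ^ (-w)) := by
  have h := Complex.summable_one_div_nat_cpow.mpr hw
  have := (summable_nat_add_iff 1).mpr h
  refine this.congr fun k => ?_
  rw [Complex.cpow_neg, one_div]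
  push_cast
  ring_nf

lemma LZ.odd_sum {w : ℂ} (hw : 1 < w.re) :
    ∑' k : ℕ, (2 * (k : ℂ) + 1) ^ (-w) = (1 - (2:ℂ) ^ (-w)) * riemannZeta w := by
  have hsum := LZ.summable_shift hw
  have he : Summable (fun k : ℕ => (((2 * k : ℕ) : ℂ) + 1) ^ (-w)) :=
    hsum.comp_injective (fun a b h => by omega)
  have ho : Summable (fun k : ℕ => (((2 * k + 1 : ℕ) : ℂ) + 1) ^ (-w)) :=
    hsum.comp_injective (fun a b h => by omega)
  have key := tsum_even_add_odd (f := fun k : ℕ => ((k:ℂ)+1)^(-w)) he ho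
  rw [LZ.zsum hw] at key
  have hodd : ∑' k : ℕ, (((2 * k + 1 : ℕ) : ℂ) + 1) ^ (-w)
      = (2:ℂ) ^ (-w) * riemannZeta w := by
    rw [← LZ.zsum hw, ← tsum_mul_left]
    refine tsum_congr fun k => ?_
    have : (((2 * k + 1 : ℕ) : ℂ) + 1) = (((2 * ((k:ℝ) + 1) : ℝ)) : ℂ) := by push_cast; ring
    rw [this, LZ.cpow_mul_split (by norm_num) (by positivity)]
    norm_num
  have heve : ∑' k : ℕ, (((2 * k : ℕ) : ℂ) + 1) ^ (-w)
      = ∑' k : ℕ, (2 * (k : ℂ) + 1) ^ (-w) :=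
    tsum_congr fun k => by push_cast; ring_nf
  rw [hodd, heve] at key
  linear_combination key

lemma LZ.hw {s : ℂ} (hs : 1 < s.re) : 1 < (2 * s).re := by
  have : (2 * s).re = 2 * s.re := by simp [Complex.mul_re]
  rw [this]; linarith

lemma LZ.hw2 {s : ℂ} (hs : 1 < s.re) : 2 < (2 * s).re := by
  have : (2 * s).re = 2 * s.re := by simp [Complex.mul_re]
  rw [this]; linarith

lemma LZ.inner_int (s : ℂ) (hs : 1 < s.re) (a : ℝ) (ha : 0 < a) :
    ∑' k : ℕ, ((((k:ℝ)+1)^2 * π^2 * a^2 : ℝ):ℂ) ^ (-s)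
      = riemannZeta (2*s) * (π:ℂ) ^ (-(2*s)) * ((a:ℝ):ℂ) ^ (-(2*s)) := by
  have hw := LZ.hw hs
  have hpt : ∀ k : ℕ, ((((k:ℝ)+1)^2 * π^2 * a^2 : ℝ):ℂ) ^ (-s)
      = ((k:ℂ)+1) ^ (-(2*s)) * ((π:ℂ) ^ (-(2*s)) * ((a:ℝ):ℂ) ^ (-(2*s))) := by
    intro k
    rw [show (((k:ℝ)+1)^2 * π^2 * a^2 : ℝ) = ((k:ℝ)+1)^2 * (π^2 * a^2) from by ring,
      LZ.cpow_mul_split (by positivity) (by positivity),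
      LZ.cpow_mul_split (by positivity) (by positivity),
      LZ.cpow_sq (by positivity), LZ.cpow_sq Real.pi_pos, LZ.cpow_sq ha, mul_neg]
    push_cast
    ring
  rw [tsum_congr hpt, tsum_mul_right, LZ.zsum hw]
  ring

lemma LZ.inner_half (s : ℂ) (hs : 1 < s.re) (a : ℝ) (ha : 0 < a) :
    ∑' k : ℕ, ((((k:ℝ)+1/2)^2 * π^2 * a^2 : ℝ):ℂ) ^ (-s)
      = ((2:ℂ)^(2*s) - 1) * riemannZeta (2*s) * (π:ℂ) ^ (-(2*s)) * ((a:ℝ):ℂ) ^ (-(2*s)) := by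
  have hw := LZ.hw hs
  have hpt : ∀ k : ℕ, ((((k:ℝ)+1/2)^2 * π^2 * a^2 : ℝ):ℂ) ^ (-s)
      = (2*(k:ℂ)+1) ^ (-(2*s)) * ((2:ℂ)^(2*s) * (π:ℂ) ^ (-(2*s)) * ((a:ℝ):ℂ) ^ (-(2*s))) := by
    intro k
    rw [show (((k:ℝ)+1/2)^2 * π^2 * a^2 : ℝ) = ((k:ℝ)+1/2)^2 * (π^2 * a^2) from by ring,
      LZ.cpow_mul_split (by positivity) (by positivity),
      LZ.cpow_mul_split (by positivity) (by positivity),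
      LZ.cpow_sq (by positivity), LZ.cpow_sq Real.pi_pos, LZ.cpow_sq ha, mul_neg,
      show ((k:ℝ)+1/2 : ℝ) = (2*(k:ℝ)+1) * (1/2) from by ring,
      LZ.cpow_mul_split (by positivity) (by norm_num), LZ.half_cpow]
    push_cast
    ring
  rw [tsum_congr hpt, tsum_mul_right, LZ.odd_sum hw]
  have h1 : (1 - (2:ℂ)^(-(2*s))) * (2:ℂ)^(2*s) = (2:ℂ)^(2*s) - 1 := by
    rw [sub_mul, one_mul, Complex.cpow_neg, inv_mul_cancel₀ LZ.two_cpow_ne]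
  linear_combination (riemannZeta (2*s) * (π:ℂ) ^ (-(2*s)) * ((a:ℝ):ℂ) ^ (-(2*s))) * h1

lemma LZ.inner_quarter (s : ℂ) (hs : 1 < s.re) (a : ℝ) (ha : 0 < a) :
    ∑' k : ℕ, ((((k:ℝ)+1)^2 * π^2 * a^2 / 4 : ℝ):ℂ) ^ (-s)
      = (2:ℂ)^(2*s) * riemannZeta (2*s) * (π:ℂ) ^ (-(2*s)) * ((a:ℝ):ℂ) ^ (-(2*s)) := by
  have h : ∀ k : ℕ, (((k:ℝ)+1)^2 * π^2 * a^2 / 4 : ℝ) = (((k:ℝ)+1)^2 * π^2 * (a/2)^2 : ℝ) :=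
    fun k => by ring
  rw [tsum_congr (fun k => by rw [h k]), LZ.inner_int s hs (a/2) (by positivity)]
  have : ((a/2 : ℝ):ℂ) ^ (-(2*s)) = ((a:ℝ):ℂ) ^ (-(2*s)) * (2:ℂ)^(2*s) := by
    rw [show (a/2 : ℝ) = a * (1/2) from by ring, LZ.cpow_mul_split ha.le (by norm_num),
      LZ.half_cpow]
  rw [this]
  ring

lemma LZ.summable_aux (w : ℂ) (hw : 2 < w.re) (I : ℕ → ℕ) (hIlb : ∀ n, 2^n ≤ I n)
    (c : ℕ → ℂ) (C : ℝ) (k : ℕ) (hc : ∀ n, ‖c n‖ ≤ C * 2^n * (I (n+k) : ℝ)) :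
    Summable (fun n : ℕ => c n * ((I (n+k) : ℕ) : ℂ) ^ (-w)) := by
  set σ := w.re with hσ
  have hpos : ∀ m, (0:ℝ) < I m := by
    intro m
    have := hIlb m
    have h2 : (0:ℕ) < 2^m := Nat.pow_pos (n := m) (by norm_num)
    exact_mod_cast lt_of_lt_of_le h2 this
  have hC : 0 ≤ C := by
    have h0 := hc 0
    have h1 := norm_nonneg (c 0)
    have h3 : 0 ≤ C * (I (0+k) : ℝ) := by
      have := le_trans h1 h0
      simpa using this
    exact (mul_nonneg_iff_of_pos_right (hpos (0+k))).mp h3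
  have hr0 : (0:ℝ) ≤ (2:ℝ)^(2-σ) := rpow_nonneg (by norm_num) _
  have hr1 : (2:ℝ)^(2-σ) < 1 := rpow_lt_one_of_one_lt_of_neg (by norm_num) (by linarith)
  refine Summable.of_norm_bounded (g := fun n => C * ((2:ℝ)^(2-σ))^n)
    ((summable_geometric_of_lt_one hr0 hr1).mul_left C) (fun n => ?_)
  have habs : ‖((I (n+k) : ℕ) : ℂ) ^ (-w)‖ = (I (n+k) : ℝ) ^ (-σ) := by
    rw [show ((I (n+k) : ℕ) : ℂ) = (((I (n+k) : ℕ) : ℝ) : ℂ) by push_cast; rfl,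
      Complex.norm_cpow_eq_rpow_re_of_pos (hpos _), Complex.neg_re]
  calc ‖c n * ((I (n+k) : ℕ) : ℂ) ^ (-w)‖
      = ‖c n‖ * (I (n+k) : ℝ) ^ (-σ) := by rw [norm_mul, habs]
    _ ≤ (C * 2^n * (I (n+k) : ℝ)) * (I (n+k) : ℝ) ^ (-σ) :=
        mul_le_mul_of_nonneg_right (hc n) (rpow_nonneg (hpos _).le _)
    _ = C * 2^n * (I (n+k) : ℝ) ^ (1-σ) := by
        rw [mul_assoc (C * 2^n)]
        congr 1
        nth_rewrite 1 [← Real.rpow_one (I (n+k) : ℝ)]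
        rw [← Real.rpow_add (hpos _), sub_eq_add_neg]
    _ ≤ C * 2^n * ((2:ℝ)^n) ^ (1-σ) := by
        refine mul_le_mul_of_nonneg_left ?_ (by positivity)
        refine Real.rpow_le_rpow_of_nonpos (by positivity) ?_ (by linarith)
        calc ((2:ℝ)^n) ≤ (2:ℝ)^(n+k) := by
              apply pow_le_pow_right₀ (by norm_num); omega
          _ ≤ (I (n+k) : ℝ) := by exact_mod_cast hIlb (n+k)
    _ = C * ((2:ℝ)^(2-σ))^n := by
        rw [mul_assoc]
        congr 1
        rw [← Real.rpow_natCast 2 n, ← Real.rpow_mul (by norm_num),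
          ← Real.rpow_add (by norm_num), ← Real.rpow_natCast ((2:ℝ)^(2-σ)) n,
          ← Real.rpow_mul (by norm_num)]
        congr 1
        ring

/-- For `Re s > 1`, the spectral zeta function of the Laplacian on a general Laakso space
equals `(ζ(2s)/π^(2s)) · [ Σ_{n≥2} (2^{n−1} I_{n−1} (2^{2s−1} + j_n − 1)
+ 2^{n−1}((3/2)·2^{2s} − 3)) / I_n^{2s} + (2^{2s+1} − 4 + j_1)/j_1^{2s} + 1 ]`. -/
theorem laakso_spectral_zeta_formula
    (j : ℕ → ℕ) (hj : ∀ n, 1 ≤ n → 2 ≤ j n)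
    (I : ℕ → ℕ) (hI : ∀ n, I n = ∏ i ∈ Finset.Icc 1 n, j i)
    (s : ℂ) (hs : 1 < s.re) :
    (∑' k : ℕ, ((((k : ℝ) + 1) ^ 2 * π ^ 2 : ℝ) : ℂ) ^ (-s)) +
    (∑' n : ℕ, (2 : ℂ) ^ (n + 1) *
      ∑' k : ℕ, ((((k : ℝ) + 1 / 2) ^ 2 * π ^ 2 * (I (n + 1) : ℝ) ^ 2 : ℝ) : ℂ) ^ (-s)) +
    (∑' n : ℕ, ((2 ^ n * (j (n + 1) - 2) * I n : ℕ) : ℂ) *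
      ∑' k : ℕ, ((((k : ℝ) + 1) ^ 2 * π ^ 2 * (I (n + 1) : ℝ) ^ 2 : ℝ) : ℂ) ^ (-s)) +
    (∑' n : ℕ, ((2 ^ (n + 1) * (I (n + 1) - 1) : ℕ) : ℂ) *
      ∑' k : ℕ, ((((k : ℝ) + 1) ^ 2 * π ^ 2 * (I (n + 2) : ℝ) ^ 2 : ℝ) : ℂ) ^ (-s)) +
    (∑' n : ℕ, ((2 ^ n * (I (n + 1) - 1) : ℕ) : ℂ) *
      ∑' k : ℕ, ((((k : ℝ) + 1) ^ 2 * π ^ 2 * (I (n + 2) : ℝ) ^ 2 / 4 : ℝ) : ℂ) ^ (-s)) =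
    (riemannZeta (2 * s) / (π : ℂ) ^ (2 * s)) *
      ((∑' n : ℕ,
          ((2 : ℂ) ^ (n + 1) * (I (n + 1) : ℂ) * ((2 : ℂ) ^ (2 * s - 1) + (j (n + 2) : ℂ) - 1) +
            (2 : ℂ) ^ (n + 1) * ((3 / 2) * (2 : ℂ) ^ (2 * s) - 3)) / (I (n + 2) : ℂ) ^ (2 * s)) +
        ((2 : ℂ) ^ (2 * s + 1) - 4 + (j 1 : ℂ)) / (j 1 : ℂ) ^ (2 * s) + 1) := by
  -- basic facts about I
  have hI0 : I 0 = 1 := by rw [hI]; simp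
  have hIstep : ∀ n, I (n+1) = I n * j (n+1) := by
    intro n
    rw [hI, hI, Finset.prod_Icc_succ_top (Nat.le_add_left 1 n)]
  have hIlb : ∀ n, 2^n ≤ I n := by
    intro n
    induction n with
    | zero => simp [hI0]
    | succ m ih =>
      rw [hIstep m, pow_succ]
      exact Nat.mul_le_mul ih (hj (m+1) (by omega))
  have hIposN : ∀ m, 0 < I m := fun m =>
    lt_of_lt_of_le (Nat.pow_pos (n := m) (by norm_num)) (hIlb m)
  have hIposR : ∀ m, (0:ℝ) < (I m : ℝ) := fun m => by exact_mod_cast hIposN m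
  have hI1 : ∀ m, 1 ≤ I m := fun m => hIposN m
  have hw2 := LZ.hw2 hs
  -- the five building series
  set u1 : ℕ → ℂ := fun n =>
    ((2:ℂ)^(n+1) * ((2:ℂ)^(2*s) - 1)) * ((I (n+1) : ℕ) : ℂ) ^ (-(2*s)) with hu1
  set u2 : ℕ → ℂ := fun n =>
    (((2 ^ n * (j (n + 1) - 2) * I n : ℕ) : ℂ)) * ((I (n+1) : ℕ) : ℂ) ^ (-(2*s)) with hu2
  set u3 : ℕ → ℂ := fun n =>
    (((2 ^ (n+1) * (I (n+1) - 1) : ℕ) : ℂ)) * ((I (n+2) : ℕ) : ℂ) ^ (-(2*s)) with hu3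
  set u4 : ℕ → ℂ := fun n =>
    (((2 ^ n * (I (n+1) - 1) : ℕ) : ℂ) * (2:ℂ)^(2*s)) * ((I (n+2) : ℕ) : ℂ) ^ (-(2*s)) with hu4
  set Z : ℂ := riemannZeta (2*s) * (π:ℂ) ^ (-(2*s)) with hZ
  -- rewrite the five LHS pieces
  have E0 : (∑' k : ℕ, ((((k : ℝ) + 1) ^ 2 * π ^ 2 : ℝ) : ℂ) ^ (-s)) = Z := by
    rw [tsum_congr (fun k : ℕ => by
      rw [show (((k : ℝ) + 1) ^ 2 * π ^ 2 : ℝ) = (((k : ℝ) + 1) ^ 2 * π ^ 2 * (1:ℝ)^2 : ℝ)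
        from by ring]),
      LZ.inner_int s hs 1 one_pos]
    norm_num [hZ]
  have E1 : (∑' n : ℕ, (2 : ℂ) ^ (n + 1) *
      ∑' k : ℕ, ((((k : ℝ) + 1 / 2) ^ 2 * π ^ 2 * (I (n + 1) : ℝ) ^ 2 : ℝ) : ℂ) ^ (-s))
      = Z * ∑' n, u1 n := by
    rw [← tsum_mul_left]
    refine tsum_congr fun n => ?_
    rw [LZ.inner_half s hs _ (hIposR (n+1)), hu1, hZ]
    push_cast
    ring
  have E2 : (∑' n : ℕ, ((2 ^ n * (j (n + 1) - 2) * I n : ℕ) : ℂ) *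
      ∑' k : ℕ, ((((k : ℝ) + 1) ^ 2 * π ^ 2 * (I (n + 1) : ℝ) ^ 2 : ℝ) : ℂ) ^ (-s))
      = Z * ∑' n, u2 n := by
    rw [← tsum_mul_left]
    refine tsum_congr fun n => ?_
    rw [LZ.inner_int s hs _ (hIposR (n+1)), hu2, hZ]
    push_cast
    ring
  have E3 : (∑' n : ℕ, ((2 ^ (n + 1) * (I (n + 1) - 1) : ℕ) : ℂ) *
      ∑' k : ℕ, ((((k : ℝ) + 1) ^ 2 * π ^ 2 * (I (n + 2) : ℝ) ^ 2 : ℝ) : ℂ) ^ (-s))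
      = Z * ∑' n, u3 n := by
    rw [← tsum_mul_left]
    refine tsum_congr fun n => ?_
    rw [LZ.inner_int s hs _ (hIposR (n+2)), hu3, hZ]
    push_cast
    ring
  have E4 : (∑' n : ℕ, ((2 ^ n * (I (n + 1) - 1) : ℕ) : ℂ) *
      ∑' k : ℕ, ((((k : ℝ) + 1) ^ 2 * π ^ 2 * (I (n + 2) : ℝ) ^ 2 / 4 : ℝ) : ℂ) ^ (-s))
      = Z * ∑' n, u4 n := by
    rw [← tsum_mul_left]
    refine tsum_congr fun n => ?_
    rw [LZ.inner_quarter s hs _ (hIposR (n+2)), hu4, hZ]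
    push_cast
    ring
  -- summability
  have hs1 : Summable u1 := by
    refine LZ.summable_aux (2*s) hw2 I hIlb _ (2 * ‖(2:ℂ)^(2*s) - 1‖) 1 (fun n => ?_)
    have h1 : (1:ℝ) ≤ (I (n+1) : ℝ) := by exact_mod_cast hI1 (n+1)
    have h2 : ‖(2:ℂ)^(n+1) * ((2:ℂ)^(2*s) - 1)‖ = 2^(n+1) * ‖(2:ℂ)^(2*s) - 1‖ := by
      rw [norm_mul, norm_pow, Complex.norm_ofNat]
    rw [h2, pow_succ]
    have h3 := norm_nonneg ((2:ℂ)^(2*s) - 1)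
    have h4 : (0:ℝ) < 2^n := by positivity
    nlinarith [mul_le_mul_of_nonneg_left h1
      (by positivity : (0:ℝ) ≤ 2 * ‖(2:ℂ)^(2*s) - 1‖ * 2^n)]
  have hs2 : Summable u2 := by
    refine LZ.summable_aux (2*s) hw2 I hIlb _ 1 1 (fun n => ?_)
    have hnat : (2 ^ n * (j (n + 1) - 2) * I n : ℕ) ≤ 2^n * I (n+1) := by
      rw [hIstep n]
      calc 2 ^ n * (j (n + 1) - 2) * I n = 2^n * ((j (n+1) - 2) * I n) := by ring
        _ ≤ 2^n * (I n * j (n+1)) := by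
            refine Nat.mul_le_mul_left _ ?_
            calc (j (n+1) - 2) * I n ≤ j (n+1) * I n :=
              Nat.mul_le_mul_right _ (Nat.sub_le _ _)
            _ = I n * j (n+1) := Nat.mul_comm _ _
    rw [Complex.norm_natCast, one_mul]
    exact_mod_cast hnat
  have hs3 : Summable u3 := by
    refine LZ.summable_aux (2*s) hw2 I hIlb _ 2 2 (fun n => ?_)
    have hnat : (2 ^ (n+1) * (I (n + 1) - 1) : ℕ) ≤ 2 * 2^n * I (n+2) := by
      have hle : I (n+1) - 1 ≤ I (n+2) := by
        have hj2 := hj (n+2) (by omega)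
        have : I (n+1) ≤ I (n+2) := by
          rw [hIstep (n+1)]
          calc I (n+1) = I (n+1) * 1 := (Nat.mul_one _).symm
            _ ≤ I (n+1) * j (n+2) := Nat.mul_le_mul_left _ (by omega)
        omega
      calc 2 ^ (n+1) * (I (n + 1) - 1) ≤ 2^(n+1) * I (n+2) := Nat.mul_le_mul_left _ hle
        _ = 2 * 2^n * I (n+2) := by ring
    rw [Complex.norm_natCast]
    exact_mod_cast hnat
  have hs4 : Summable u4 := by
    refine LZ.summable_aux (2*s) hw2 I hIlb _ ‖(2:ℂ)^(2*s)‖ 2 (fun n => ?_)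
    have hnat : (2 ^ n * (I (n + 1) - 1) : ℕ) ≤ 2^n * I (n+2) := by
      have hle : I (n+1) - 1 ≤ I (n+2) := by
        have hj2 := hj (n+2) (by omega)
        have : I (n+1) ≤ I (n+2) := by
          rw [hIstep (n+1)]
          calc I (n+1) = I (n+1) * 1 := (Nat.mul_one _).symm
            _ ≤ I (n+1) * j (n+2) := Nat.mul_le_mul_left _ (by omega)
        omega
      exact Nat.mul_le_mul_left _ hle
    rw [norm_mul, Complex.norm_natCast]
    have h1 : ((2 ^ n * (I (n + 1) - 1) : ℕ) : ℝ) ≤ 2^n * (I (n+2) : ℝ) := by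
      exact_mod_cast hnat
    have h2 := norm_nonneg ((2:ℂ)^(2*s))
    nlinarith [mul_le_mul_of_nonneg_right h1 h2]
  have hs1' : Summable (fun n => u1 (n+1)) := (summable_nat_add_iff 1).mpr hs1
  have hs2' : Summable (fun n => u2 (n+1)) := (summable_nat_add_iff 1).mpr hs2
  -- the f-series equals the combined shifted series
  have hf : (∑' n : ℕ,
        ((2 : ℂ) ^ (n + 1) * (I (n + 1) : ℂ) * ((2 : ℂ) ^ (2 * s - 1) + (j (n + 2) : ℂ) - 1) +
          (2 : ℂ) ^ (n + 1) * ((3 / 2) * (2 : ℂ) ^ (2 * s) - 3)) / (I (n + 2) : ℂ) ^ (2 * s))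
      = (∑' n, u1 (n+1)) + (∑' n, u2 (n+1)) + (∑' n, u3 n) + (∑' n, u4 n) := by
    rw [← Summable.tsum_add hs1' hs2', ← Summable.tsum_add (hs1'.add hs2') hs3,
      ← Summable.tsum_add ((hs1'.add hs2').add hs3) hs4]
    refine tsum_congr fun n => ?_
    have h2 : 2 ≤ j (n+2) := hj _ (by omega)
    have h1 : 1 ≤ I (n+1) := hI1 _
    rw [hu1, hu2, hu3, hu4]
    simp only
    rw [Complex.cpow_sub _ _ (by norm_num : (2:ℂ) ≠ 0), Complex.cpow_one, Complex.cpow_neg]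
    push_cast [Nat.cast_sub h2, Nat.cast_sub h1]
    rw [div_eq_mul_inv]
    ring
  -- the first terms give the j 1 part
  have hJ : u1 0 + u2 0
      = ((2 : ℂ) ^ (2 * s + 1) - 4 + (j 1 : ℂ)) / (j 1 : ℂ) ^ (2 * s) := by
    have hI1eq : I 1 = j 1 := by rw [hIstep 0, hI0, one_mul]
    rw [hu1, hu2]
    simp only
    rw [hI0, hI1eq, Complex.cpow_add _ _ (by norm_num : (2:ℂ) ≠ 0), Complex.cpow_one,
      Complex.cpow_neg]
    push_cast [Nat.cast_sub (hj 1 le_rfl)]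
    rw [div_eq_mul_inv]
    ring
  -- final assembly
  rw [E0, E1, E2, E3, E4]
  have hZdiv : riemannZeta (2 * s) / (π : ℂ) ^ (2 * s) = Z := by
    rw [hZ, div_eq_mul_inv, Complex.cpow_neg]
  rw [hZdiv]
  have claim : (∑' n, u1 n) + (∑' n, u2 n) + (∑' n, u3 n) + (∑' n, u4 n)
      = (∑' n : ℕ,
        ((2 : ℂ) ^ (n + 1) * (I (n + 1) : ℂ) * ((2 : ℂ) ^ (2 * s - 1) + (j (n + 2) : ℂ) - 1) +
          (2 : ℂ) ^ (n + 1) * ((3 / 2) * (2 : ℂ) ^ (2 * s) - 3)) / (I (n + 2) : ℂ) ^ (2 * s))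
        + ((2 : ℂ) ^ (2 * s + 1) - 4 + (j 1 : ℂ)) / (j 1 : ℂ) ^ (2 * s) := by
    rw [Summable.tsum_eq_zero_add hs1, Summable.tsum_eq_zero_add hs2, hf, ← hJ]
    ring
  linear_combination Z * claim
end

section
/- Let j : ℕ → ℕ (indexed from 1) satisfy j n ≥ 2 for all n ≥ 1, set I n = ∏_{i=1}^n j i, and let t > 0. Then the family of terms (multiplicity)·exp(−λ·t), where λ ranges over the eigenvalues k²π² (k ≥ 0, multiplicity 1), (k+1/2)²π²(I n)² (k ≥ 0, n ≥ 1, multiplicity 2^n), k²π²(I n)² (k ≥ 1, n ≥ 1, multiplicity 2^{n−1}(j n − 2)·I(n−1)), k²π²(I n)² (k ≥ 1, n ≥ 2, multiplicity 2^{n−1}(I(n−1) − 1)), and k²π²(I n)²/4 (k ≥ 1, n ≥ 2, multiplicity 2^{n−2}(I(n−1) − 1)), is summable. Hence the trace of the heat kernel Z(t) = Σ (multiplicity)·exp(−λ·t) is a well-defined finite quantity for every t > 0. -/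
open Real

private lemma xexp_le {a x : ℝ} (ha : 0 < a) (hx : 0 ≤ x) :
    x * Real.exp (-(a * x)) ≤ 1 / a := by
  have h : a * x ≤ Real.exp (a * x) :=
    le_trans (by linarith) (Real.add_one_le_exp (a * x))
  have key : a * x * Real.exp (-(a * x)) ≤ 1 := by
    have := mul_le_mul_of_nonneg_right h (Real.exp_nonneg (-(a * x)))
    rwa [← Real.exp_add, add_neg_cancel, Real.exp_zero] at this
  have heq : x * Real.exp (-(a * x)) = (a * x * Real.exp (-(a * x))) / a := by
    field_simp
  rw [heq]
  gcongr

set_option maxHeartbeats 800000 in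
private lemma master (c : ℝ) (hc : 0 < c) (L : ℕ → ℝ)
    (hL : ∀ n, (2 : ℝ) ^ (n + 1) ≤ L n)
    (f : ℕ × ℕ → ℝ) (hf0 : ∀ p, 0 ≤ f p)
    (hf : ∀ p : ℕ × ℕ, f p ≤ 2 ^ (p.1 + 1) * L p.1 *
      Real.exp (-(c * ((p.2 : ℝ) + (L p.1) ^ 2)))) :
    Summable f := by
  have hr1 : Real.exp (-(2 * c)) < 1 := Real.exp_lt_one_iff.2 (by linarith)
  have hr2 : Real.exp (-c) < 1 := Real.exp_lt_one_iff.2 (by linarith)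
  have hG : Summable (fun p : ℕ × ℕ =>
      ((2 / c * Real.exp (-(2 * c))) * Real.exp (-(2 * c)) ^ p.1) *
        Real.exp (-c) ^ p.2) :=
    Summable.mul_of_nonneg
      ((summable_geometric_of_lt_one (Real.exp_nonneg _) hr1).mul_left _)
      (summable_geometric_of_lt_one (Real.exp_nonneg _) hr2)
      (fun n => by positivity) (fun k => by positivity)
  refine Summable.of_nonneg_of_le hf0 (fun p => (hf p).trans ?_) hG
  obtain ⟨n, k⟩ := p
  have hu1 : (1 : ℝ) ≤ (2 : ℝ) ^ n := one_le_pow₀ (by norm_num)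
  have hLn : 2 * (2 : ℝ) ^ n ≤ L n := by
    have := hL n; rw [pow_succ] at this; linarith
  have hL0 : 0 < L n := by linarith
  have hsplit : c * (2 : ℝ) ^ n * L n + 2 * c * ((2 : ℝ) ^ n) ^ 2 ≤ c * (L n) ^ 2 := by
    have h := mul_nonneg (sub_nonneg.2 hLn)
      (by linarith : (0 : ℝ) ≤ L n + (2 : ℝ) ^ n)
    nlinarith [hc.le]
  have e1 : Real.exp (-(c * (L n) ^ 2)) ≤
      Real.exp (-(c * (2 : ℝ) ^ n * L n)) * Real.exp (-(2 * c * ((2 : ℝ) ^ n) ^ 2)) := by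
    rw [← Real.exp_add]
    exact Real.exp_le_exp.2 (by linarith)
  have e2 : L n * Real.exp (-(c * (2 : ℝ) ^ n * L n)) ≤ 1 / (c * (2 : ℝ) ^ n) := by
    have := xexp_le (a := c * (2 : ℝ) ^ n) (x := L n) (by positivity) hL0.le
    simpa [mul_assoc] using this
  have hnu : (n : ℝ) + 1 ≤ ((2 : ℝ) ^ n) ^ 2 := by
    have h1 : (n : ℝ) + 1 ≤ (2 : ℝ) ^ n := by
      exact_mod_cast Nat.succ_le_of_lt (Nat.lt_two_pow_self (n := n))
    nlinarith
  have e3 : Real.exp (-(2 * c * ((2 : ℝ) ^ n) ^ 2)) ≤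
      Real.exp (-(2 * c * ((n : ℝ) + 1))) :=
    Real.exp_le_exp.2 (by nlinarith)
  have key : (2 : ℝ) ^ (n + 1) * L n * Real.exp (-(c * (L n) ^ 2)) ≤
      2 / c * Real.exp (-(2 * c)) * Real.exp (-(2 * c)) ^ n := by
    have hpow : 2 / c * Real.exp (-(2 * c)) * Real.exp (-(2 * c)) ^ n =
        (2 / c) * Real.exp (-(2 * c * ((n : ℝ) + 1))) := by
      rw [mul_assoc, ← Real.exp_nat_mul, ← Real.exp_add]
      congr 1
      ring
    rw [hpow]
    calc (2 : ℝ) ^ (n + 1) * L n * Real.exp (-(c * (L n) ^ 2))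
        ≤ (2 : ℝ) ^ (n + 1) * L n *
          (Real.exp (-(c * (2 : ℝ) ^ n * L n)) * Real.exp (-(2 * c * ((2 : ℝ) ^ n) ^ 2))) :=
          mul_le_mul_of_nonneg_left e1 (by positivity)
      _ = (2 * (2 : ℝ) ^ n) * ((L n * Real.exp (-(c * (2 : ℝ) ^ n * L n))) *
          Real.exp (-(2 * c * ((2 : ℝ) ^ n) ^ 2))) := by rw [pow_succ]; ring
      _ ≤ (2 * (2 : ℝ) ^ n) * ((1 / (c * (2 : ℝ) ^ n)) *
          Real.exp (-(2 * c * ((2 : ℝ) ^ n) ^ 2))) := by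
          refine mul_le_mul_of_nonneg_left ?_ (by positivity)
          exact mul_le_mul_of_nonneg_right e2 (Real.exp_nonneg _)
      _ = (2 / c) * Real.exp (-(2 * c * ((2 : ℝ) ^ n) ^ 2)) := by
          rw [← mul_assoc]
          congr 1
          rw [mul_one_div]
          rw [eq_div_iff (ne_of_gt hc)]
          field_simp
      _ ≤ (2 / c) * Real.exp (-(2 * c * ((n : ℝ) + 1))) :=
          mul_le_mul_of_nonneg_left e3 (by positivity)
  calc (2 : ℝ) ^ (n + 1) * L n * Real.exp (-(c * ((k : ℝ) + (L n) ^ 2)))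
      = ((2 : ℝ) ^ (n + 1) * L n * Real.exp (-(c * (L n) ^ 2))) * Real.exp (-c) ^ k := by
        have hsplit2 : Real.exp (-(c * ((k : ℝ) + (L n) ^ 2))) =
            Real.exp (-(c * (L n) ^ 2)) * Real.exp ((k : ℝ) * -c) := by
          rw [← Real.exp_add]; congr 1; ring
        rw [← Real.exp_nat_mul, hsplit2]
        ring
  _ ≤ (2 / c * Real.exp (-(2 * c)) * Real.exp (-(2 * c)) ^ n) * Real.exp (-c) ^ k :=
        mul_le_mul_of_nonneg_right key (by positivity)

/-- For every `t > 0`, the family `(multiplicity)·exp(−λt)` over the eigenvalues of the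
Laplacian on a Laakso space is summable, so the heat-kernel trace `Z(t)` is well defined. -/
theorem laakso_heat_trace_summable
    (j : ℕ → ℕ) (hj : ∀ n, 1 ≤ n → 2 ≤ j n)
    (I : ℕ → ℕ) (hI : ∀ n, I n = ∏ i ∈ Finset.Icc 1 n, j i)
    (t : ℝ) (ht : 0 < t) :
    Summable (fun k : ℕ => Real.exp (-((k : ℝ) ^ 2 * π ^ 2) * t)) ∧
    Summable (fun p : ℕ × ℕ => (2 : ℝ) ^ (p.1 + 1) *
      Real.exp (-(((p.2 : ℝ) + 1 / 2) ^ 2 * π ^ 2 * (I (p.1 + 1) : ℝ) ^ 2) * t)) ∧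
    Summable (fun p : ℕ × ℕ => ((2 ^ p.1 * (j (p.1 + 1) - 2) * I p.1 : ℕ) : ℝ) *
      Real.exp (-(((p.2 : ℝ) + 1) ^ 2 * π ^ 2 * (I (p.1 + 1) : ℝ) ^ 2) * t)) ∧
    Summable (fun p : ℕ × ℕ => ((2 ^ (p.1 + 1) * (I (p.1 + 1) - 1) : ℕ) : ℝ) *
      Real.exp (-(((p.2 : ℝ) + 1) ^ 2 * π ^ 2 * (I (p.1 + 2) : ℝ) ^ 2) * t)) ∧
    Summable (fun p : ℕ × ℕ => ((2 ^ p.1 * (I (p.1 + 1) - 1) : ℕ) : ℝ) *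
      Real.exp (-(((p.2 : ℝ) + 1) ^ 2 * π ^ 2 * (I (p.1 + 2) : ℝ) ^ 2 / 4) * t)) := by
  have hpi : (0 : ℝ) < π := Real.pi_pos
  have hIsucc : ∀ n : ℕ, I (n + 1) = I n * j (n + 1) := by
    intro n
    rw [hI, hI, Finset.prod_Icc_succ_top (Nat.le_add_left 1 n)]
  have hIge : ∀ n : ℕ, 2 ^ n ≤ I n := by
    intro n
    induction n with
    | zero => simp [hI]
    | succ m ih =>
      rw [hIsucc, pow_succ]
      exact Nat.mul_le_mul ih (hj (m + 1) (Nat.le_add_left 1 m))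
  have hL1 : ∀ n : ℕ, (2 : ℝ) ^ (n + 1) ≤ (I (n + 1) : ℝ) := by
    intro n; exact_mod_cast hIge (n + 1)
  have hL2 : ∀ n : ℕ, (2 : ℝ) ^ (n + 1) ≤ (I (n + 2) : ℝ) := by
    intro n
    calc (2 : ℝ) ^ (n + 1) ≤ (2 : ℝ) ^ (n + 2) :=
          pow_le_pow_right₀ (by norm_num) (by omega)
      _ ≤ (I (n + 2) : ℝ) := by exact_mod_cast hIge (n + 2)
  have hone : ∀ n : ℕ, (1 : ℝ) ≤ (2 : ℝ) ^ (n + 1) := fun n => one_le_pow₀ (by norm_num)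
  set c : ℝ := π ^ 2 * t / 4 with hcdef
  have hc0 : 0 < c := by positivity
  refine ⟨?_, ?_, ?_, ?_, ?_⟩
  · -- family 1
    refine Summable.of_nonneg_of_le (fun k => Real.exp_nonneg _) (fun k => ?_)
      (summable_geometric_of_lt_one (Real.exp_nonneg (-(π ^ 2 * t)))
        (Real.exp_lt_one_iff.2 (by nlinarith)))
    rw [← Real.exp_nat_mul]
    apply Real.exp_le_exp.2
    have hk : (k : ℝ) ≤ (k : ℝ) ^ 2 := by
      have : k ≤ k ^ 2 := Nat.le_self_pow two_ne_zero k
      exact_mod_cast this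
    nlinarith
  · -- family 2
    refine master c hc0 (fun n => (I (n + 1) : ℝ)) hL1 _ (fun p => by positivity)
      (fun p => ?_)
    obtain ⟨n, k⟩ := p
    have hL : (2 : ℝ) ^ (n + 1) ≤ (I (n + 1) : ℝ) := hL1 n
    have h1 : (1 : ℝ) ≤ (I (n + 1) : ℝ) := (hone n).trans hL
    apply mul_le_mul
    · nlinarith [hone n]
    · apply Real.exp_le_exp.2
      dsimp only
      have hk : (0 : ℝ) ≤ (k : ℝ) := Nat.cast_nonneg k
      have hLsq : (1 : ℝ) ≤ (I (n + 1) : ℝ) ^ 2 := one_le_pow₀ h1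
      have hkL : (k : ℝ) * 1 ≤ (k : ℝ) * (I (n + 1) : ℝ) ^ 2 :=
        mul_le_mul_of_nonneg_left hLsq hk
      have key : (k : ℝ) + (I (n + 1) : ℝ) ^ 2 ≤
          4 * (((k : ℝ) + 1 / 2) ^ 2 * (I (n + 1) : ℝ) ^ 2) := by nlinarith
      have hP : (0 : ℝ) ≤ π ^ 2 * t := by positivity
      rw [hcdef]
      nlinarith [mul_le_mul_of_nonneg_left key hP]
    · exact Real.exp_nonneg _
    · positivity
  · -- family 3
    refine master c hc0 (fun n => (I (n + 1) : ℝ)) hL1 _ (fun p => by positivity)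
      (fun p => ?_)
    obtain ⟨n, k⟩ := p
    have hL : (2 : ℝ) ^ (n + 1) ≤ (I (n + 1) : ℝ) := hL1 n
    have h1 : (1 : ℝ) ≤ (I (n + 1) : ℝ) := (hone n).trans hL
    apply mul_le_mul
    · have hnat : 2 ^ n * (j (n + 1) - 2) * I n ≤ 2 ^ (n + 1) * I (n + 1) := by
        calc 2 ^ n * (j (n + 1) - 2) * I n ≤ 2 ^ n * j (n + 1) * I n :=
              Nat.mul_le_mul_right _ (Nat.mul_le_mul_left _ (Nat.sub_le _ _))
          _ = 2 ^ n * I (n + 1) := by rw [hIsucc]; ring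
          _ ≤ 2 ^ (n + 1) * I (n + 1) :=
              Nat.mul_le_mul_right _ (Nat.pow_le_pow_right (by norm_num) (by omega))
      calc ((2 ^ n * (j (n + 1) - 2) * I n : ℕ) : ℝ)
          ≤ ((2 ^ (n + 1) * I (n + 1) : ℕ) : ℝ) := by exact_mod_cast hnat
        _ = (2 : ℝ) ^ (n + 1) * (I (n + 1) : ℝ) := by push_cast; ring
    · apply Real.exp_le_exp.2
      dsimp only
      have hk : (0 : ℝ) ≤ (k : ℝ) := Nat.cast_nonneg k
      have hLsq : (1 : ℝ) ≤ (I (n + 1) : ℝ) ^ 2 := one_le_pow₀ h1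
      have hkL : (k : ℝ) * 1 ≤ (k : ℝ) * (I (n + 1) : ℝ) ^ 2 :=
        mul_le_mul_of_nonneg_left hLsq hk
      have key : (k : ℝ) + (I (n + 1) : ℝ) ^ 2 ≤
          4 * (((k : ℝ) + 1) ^ 2 * (I (n + 1) : ℝ) ^ 2) := by nlinarith
      have hP : (0 : ℝ) ≤ π ^ 2 * t := by positivity
      rw [hcdef]
      nlinarith [mul_le_mul_of_nonneg_left key hP]
    · exact Real.exp_nonneg _
    · positivity
  · -- family 4
    refine master c hc0 (fun n => (I (n + 2) : ℝ)) hL2 _ (fun p => by positivity)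
      (fun p => ?_)
    obtain ⟨n, k⟩ := p
    have hL : (2 : ℝ) ^ (n + 1) ≤ (I (n + 2) : ℝ) := hL2 n
    have h1 : (1 : ℝ) ≤ (I (n + 2) : ℝ) := (hone n).trans hL
    apply mul_le_mul
    · have hnat : 2 ^ (n + 1) * (I (n + 1) - 1) ≤ 2 ^ (n + 1) * I (n + 2) := by
        apply Nat.mul_le_mul_left
        calc I (n + 1) - 1 ≤ I (n + 1) := Nat.sub_le _ _
          _ ≤ I (n + 1) * j (n + 2) := Nat.le_mul_of_pos_right _
              (by have := hj (n + 2) (by omega); omega)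
          _ = I (n + 2) := (hIsucc (n + 1)).symm
      calc ((2 ^ (n + 1) * (I (n + 1) - 1) : ℕ) : ℝ)
          ≤ ((2 ^ (n + 1) * I (n + 2) : ℕ) : ℝ) := by exact_mod_cast hnat
        _ = (2 : ℝ) ^ (n + 1) * (I (n + 2) : ℝ) := by push_cast; ring
    · apply Real.exp_le_exp.2
      dsimp only
      have hk : (0 : ℝ) ≤ (k : ℝ) := Nat.cast_nonneg k
      have hLsq : (1 : ℝ) ≤ (I (n + 2) : ℝ) ^ 2 := one_le_pow₀ h1
      have hkL : (k : ℝ) * 1 ≤ (k : ℝ) * (I (n + 2) : ℝ) ^ 2 :=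
        mul_le_mul_of_nonneg_left hLsq hk
      have key : (k : ℝ) + (I (n + 2) : ℝ) ^ 2 ≤
          4 * (((k : ℝ) + 1) ^ 2 * (I (n + 2) : ℝ) ^ 2) := by nlinarith
      have hP : (0 : ℝ) ≤ π ^ 2 * t := by positivity
      rw [hcdef]
      nlinarith [mul_le_mul_of_nonneg_left key hP]
    · exact Real.exp_nonneg _
    · positivity
  · -- family 5
    refine master c hc0 (fun n => (I (n + 2) : ℝ)) hL2 _ (fun p => by positivity)
      (fun p => ?_)
    obtain ⟨n, k⟩ := p
    have hL : (2 : ℝ) ^ (n + 1) ≤ (I (n + 2) : ℝ) := hL2 n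
    have h1 : (1 : ℝ) ≤ (I (n + 2) : ℝ) := (hone n).trans hL
    apply mul_le_mul
    · have hnat : 2 ^ n * (I (n + 1) - 1) ≤ 2 ^ (n + 1) * I (n + 2) := by
        apply Nat.mul_le_mul (Nat.pow_le_pow_right (by norm_num) (by omega))
        calc I (n + 1) - 1 ≤ I (n + 1) := Nat.sub_le _ _
          _ ≤ I (n + 1) * j (n + 2) := Nat.le_mul_of_pos_right _
              (by have := hj (n + 2) (by omega); omega)
          _ = I (n + 2) := (hIsucc (n + 1)).symm
      calc ((2 ^ n * (I (n + 1) - 1) : ℕ) : ℝ)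
          ≤ ((2 ^ (n + 1) * I (n + 2) : ℕ) : ℝ) := by exact_mod_cast hnat
        _ = (2 : ℝ) ^ (n + 1) * (I (n + 2) : ℝ) := by push_cast; ring
    · apply Real.exp_le_exp.2
      dsimp only
      have hk : (0 : ℝ) ≤ (k : ℝ) := Nat.cast_nonneg k
      have hLsq : (1 : ℝ) ≤ (I (n + 2) : ℝ) ^ 2 := one_le_pow₀ h1
      have hkL : (k : ℝ) * 1 ≤ (k : ℝ) * (I (n + 2) : ℝ) ^ 2 :=
        mul_le_mul_of_nonneg_left hLsq hk
      have key : (k : ℝ) + (I (n + 2) : ℝ) ^ 2 ≤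
          ((k : ℝ) + 1) ^ 2 * (I (n + 2) : ℝ) ^ 2 := by nlinarith
      have hP : (0 : ℝ) ≤ π ^ 2 * t := by positivity
      rw [hcdef]
      nlinarith [mul_le_mul_of_nonneg_left key hP]
    · exact Real.exp_nonneg _
    · positivity
end

section
/- Let j n = 2 for all n ≥ 1, so that I n = 2^n, and let s ∈ ℂ with Re(s) > 1. Then the spectral zeta function of the associated Laakso space satisfies ζ_{L₂}(s) = (ζ(2s)/π^{2s}) · [ 4·(2^{2s−1} + 1)/(4^s·(4^s − 4)) + 3/4^s + (2^{2s+1} − 2)/4^s + 1 ], where ζ denotes the Riemann zeta function and all complex powers are principal. -/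
open Real

lemma aux_ofReal_pow_cpow (a : ℝ) (ha : 0 ≤ a) (z : ℂ) (m : ℕ) :
    ((a ^ m : ℝ) : ℂ) ^ z = (((a : ℝ) : ℂ) ^ z) ^ m := by
  induction m with
  | zero => simp
  | succ n ih =>
    rw [pow_succ, Complex.ofReal_mul,
      Complex.mul_cpow_ofReal_nonneg (pow_nonneg ha n) ha, ih, pow_succ]

lemma aux_sq_cpow (a : ℝ) (ha : 0 < a) (s : ℂ) :
    ((a ^ 2 : ℝ) : ℂ) ^ (-s) = ((a : ℝ) : ℂ) ^ (-(2 * s)) := by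
  rw [aux_ofReal_pow_cpow a ha.le (-s) 2, sq,
    ← Complex.cpow_add _ _ (by exact_mod_cast ha.ne' : ((a:ℝ):ℂ) ≠ 0)]
  ring_nf

lemma aux_two_cpow (s : ℂ) : (2 : ℂ) ^ (2 * s) = (4 : ℂ) ^ s := by
  have h4 : (4 : ℂ) = ((2:ℝ):ℂ) * ((2:ℝ):ℂ) := by norm_num
  rw [h4, Complex.mul_cpow_ofReal_nonneg (by norm_num) (by norm_num)]
  push_cast
  rw [← Complex.cpow_add _ _ (by norm_num : (2:ℂ) ≠ 0), two_mul]

lemma aux_key (s : ℂ) (x : ℝ) (hx : 0 < x) (m : ℕ) :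
    ((x ^ 2 * π ^ 2 * 4 ^ m : ℝ) : ℂ) ^ (-s) =
      ((x : ℝ) : ℂ) ^ (-(2 * s)) * ((π : ℝ) : ℂ) ^ (-(2 * s)) * ((4 : ℂ) ^ (-s)) ^ m := by
  have hre : (x ^ 2 * π ^ 2 * 4 ^ m : ℝ) = (x * π * 2 ^ m) ^ 2 := by
    rw [show (4:ℝ) = 2 ^ 2 by norm_num, ← pow_mul]
    ring
  have hy : 0 < x * π * 2 ^ m := by positivity
  rw [hre, aux_sq_cpow _ hy, Complex.ofReal_mul (x*π) ((2:ℝ)^m),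
    Complex.mul_cpow_ofReal_nonneg (by positivity) (by positivity),
    Complex.ofReal_mul x π,
    Complex.mul_cpow_ofReal_nonneg hx.le pi_pos.le,
    aux_ofReal_pow_cpow 2 (by norm_num) (-(2*s)) m]
  have h2 : ((2:ℝ):ℂ) ^ (-(2*s)) = (4:ℂ) ^ (-s) := by
    push_cast
    rw [show -(2*s) = 2 * (-s) by ring, aux_two_cpow]
  rw [h2]

set_option maxHeartbeats 1000000 in
lemma aux_zsummable (w : ℂ) (hw : 1 < w.re) :
    Summable (fun n : ℕ => ((n : ℂ) + 1) ^ (-w)) := by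
  have h := (summable_nat_add_iff 1).mpr (Complex.summable_one_div_nat_cpow.mpr hw)
  exact h.congr fun n => by push_cast; rw [Complex.cpow_neg, one_div]

lemma aux_zsum (w : ℂ) (hw : 1 < w.re) :
    ∑' n : ℕ, ((n : ℂ) + 1) ^ (-w) = riemannZeta w := by
  rw [zeta_eq_tsum_one_div_nat_add_one_cpow hw]
  exact tsum_congr fun n => by rw [Complex.cpow_neg, one_div]

lemma aux_odd (w : ℂ) (hw : 1 < w.re) :
    ∑' k : ℕ, (2 * (k : ℂ) + 1) ^ (-w) = (1 - (2 : ℂ) ^ (-w)) * riemannZeta w := by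
  have hw0 : w ≠ 0 := by intro h; rw [h] at hw; norm_num at hw
  set f : ℕ → ℂ := fun n => (n : ℂ) ^ (-w) with hfdef
  have hsummf : Summable f := by
    exact (Complex.summable_one_div_nat_cpow.mpr hw).congr
      fun n => by simp only [hfdef]; rw [Complex.cpow_neg, one_div]
  have hf0 : f 0 = 0 := by
    simp only [f, Nat.cast_zero]
    exact Complex.zero_cpow (neg_ne_zero.mpr hw0)
  have he : Summable fun k => f (2 * k) :=
    hsummf.comp_injective (mul_right_injective₀ two_ne_zero)
  have ho : Summable fun k => f (2 * k + 1) :=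
    hsummf.comp_injective (fun a b h => by omega)
  have heo := tsum_even_add_odd he ho
  have heven : ∀ k, f (2 * k) = (2 : ℂ) ^ (-w) * f k := by
    intro k
    simp only [f]
    have h1 : ((2 * k : ℕ) : ℂ) = ((2 : ℝ) : ℂ) * ((k : ℝ) : ℂ) := by push_cast; ring
    rw [h1, Complex.mul_cpow_ofReal_nonneg (by norm_num) (Nat.cast_nonneg k)]
    norm_num
  have hevensum : ∑' k, f (2 * k) = (2 : ℂ) ^ (-w) * ∑' k, f k := by
    rw [tsum_congr heven, tsum_mul_left]
  have hfull : ∑' n, f n = riemannZeta w := by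
    rw [hsummf.tsum_eq_zero_add, hf0, zero_add, ← aux_zsum w hw]
    exact tsum_congr fun n => by simp only [f]; push_cast; rfl
  have hoddterm : ∀ k : ℕ, f (2 * k + 1) = (2 * (k : ℂ) + 1) ^ (-w) := by
    intro k; simp only [f]; push_cast; rfl
  rw [← tsum_congr hoddterm]
  have hsplit : ∑' k, f (2 * k + 1) = ∑' n, f n - ∑' k, f (2 * k) := by
    rw [← heo]; ring
  rw [hsplit, hevensum, hfull]
  ring


set_option maxHeartbeats 1000000 in
lemma aux_alg_a (a : ℂ) (ha : a ≠ 0) (h2 : a - 2 ≠ 0) (h4 : a - 4 ≠ 0) :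
    1 + 2 * (1 - a⁻¹) * (a / (a - 2)) +
      (4 * (a⁻¹) ^ 2 * (a / (a - 4)) - 2 * (a⁻¹) ^ 2 * (a / (a - 2))) +
      (2 * a⁻¹ * (a / (a - 4)) - a⁻¹ * (a / (a - 2))) =
    4 * (a / 2 + 1) / (a * (a - 4)) + 3 / a + (a * 2 - 2) / a + 1 := by
  field_simp
  have hD1 : (a - 2) * (a ^ 2 * (a - 4) * (a ^ 2 * (a - 2))) ≠ 0 := by
    exact mul_ne_zero h2 (mul_ne_zero (mul_ne_zero (pow_ne_zero 2 ha) h4)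
      (mul_ne_zero (pow_ne_zero 2 ha) h2))
  have hD2 : 2 * (a * (a - 4)) * a * a ≠ 0 := by
    exact mul_ne_zero (mul_ne_zero (mul_ne_zero two_ne_zero (mul_ne_zero ha h4)) ha) ha
  ring

lemma aux_alg (Z p a : ℂ) (ha : a ≠ 0) (h2 : a - 2 ≠ 0) (h4 : a - 4 ≠ 0) (hp : p ≠ 0) :
    Z * p⁻¹ + 2 * ((1 - a⁻¹) * Z) * p⁻¹ * (1 - 2 * a⁻¹)⁻¹ +
      (4 * Z * p⁻¹ * (a⁻¹) ^ 2 * (1 - 4 * a⁻¹)⁻¹ - 2 * Z * p⁻¹ * (a⁻¹) ^ 2 * (1 - 2 * a⁻¹)⁻¹) +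
      (2 * Z * p⁻¹ * a⁻¹ * (1 - 4 * a⁻¹)⁻¹ - Z * p⁻¹ * a⁻¹ * (1 - 2 * a⁻¹)⁻¹) =
    Z / p * (4 * (a / 2 + 1) / (a * (a - 4)) + 3 / a + (a * 2 - 2) / a + 1) := by
  have hd2 : (1:ℂ) - 2 * a⁻¹ = (a - 2) / a := by field_simp
  have hd4 : (1:ℂ) - 4 * a⁻¹ = (a - 4) / a := by field_simp
  rw [hd2, hd4, inv_div, inv_div]
  linear_combination (Z * p⁻¹) * aux_alg_a a ha h2 h4

set_option maxHeartbeats 2000000 in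
/-- For `Re s > 1`, the spectral zeta function of the `j = 2` Laakso space (where
`I n = 2^n`, so the loop family is absent) equals
`(ζ(2s)/π^(2s)) · [4(2^{2s−1}+1)/(4^s(4^s−4)) + 3/4^s + (2^{2s+1}−2)/4^s + 1]`. -/
theorem laakso_spectral_zeta_j2
    (s : ℂ) (hs : 1 < s.re) :
    (∑' k : ℕ, ((((k : ℝ) + 1) ^ 2 * π ^ 2 : ℝ) : ℂ) ^ (-s)) +
    (∑' n : ℕ, (2 : ℂ) ^ (n + 1) *
      ∑' k : ℕ, ((((k : ℝ) + 1 / 2) ^ 2 * π ^ 2 * (4 : ℝ) ^ (n + 1) : ℝ) : ℂ) ^ (-s)) +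
    (∑' n : ℕ, ((2 ^ (n + 1) * (2 ^ (n + 1) - 1) : ℕ) : ℂ) *
      ∑' k : ℕ, ((((k : ℝ) + 1) ^ 2 * π ^ 2 * (4 : ℝ) ^ (n + 2) : ℝ) : ℂ) ^ (-s)) +
    (∑' n : ℕ, ((2 ^ n * (2 ^ (n + 1) - 1) : ℕ) : ℂ) *
      ∑' k : ℕ, ((((k : ℝ) + 1) ^ 2 * π ^ 2 * (4 : ℝ) ^ (n + 2) / 4 : ℝ) : ℂ) ^ (-s)) =
    (riemannZeta (2 * s) / (π : ℂ) ^ (2 * s)) *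
      (4 * ((2 : ℂ) ^ (2 * s - 1) + 1) / ((4 : ℂ) ^ s * ((4 : ℂ) ^ s - 4)) +
        3 / (4 : ℂ) ^ s + ((2 : ℂ) ^ (2 * s + 1) - 2) / (4 : ℂ) ^ s + 1) := by
  have hw : 1 < (2 * s).re := by
    rw [Complex.mul_re]
    simp only [Complex.re_ofNat, Complex.im_ofNat, zero_mul, sub_zero]
    linarith
  set Z : ℂ := riemannZeta (2 * s) with hZ
  set P : ℂ := ((π : ℝ) : ℂ) ^ (-(2 * s)) with hP
  set q : ℂ := (4 : ℂ) ^ (-s) with hq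
  -- norm estimates
  have habsq : ‖(4:ℂ)^(-s)‖ = (4:ℝ)^(-s.re) := by
    rw [show (4:ℂ) = ((4:ℝ):ℂ) by norm_num,
      Complex.norm_cpow_eq_rpow_re_of_pos (by norm_num)]
    simp
  have hqlt : (4:ℝ)^(-s.re) < (4:ℝ)^(-1:ℝ) :=
    (Real.rpow_lt_rpow_left_iff (by norm_num)).mpr (by linarith)
  have h4inv : (4:ℝ)^(-1:ℝ) = 1/4 := by
    rw [Real.rpow_neg_one]; norm_num
  have hqpos : (0:ℝ) ≤ (4:ℝ)^(-s.re) := (Real.rpow_pos_of_pos (by norm_num) _).le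
  rw [h4inv] at hqlt
  have hq4 : ‖(4:ℂ) * q‖ < 1 := by
    rw [norm_mul, hq, habsq]
    have h44 : ‖(4:ℂ)‖ = 4 := by norm_num
    rw [h44]
    linarith
  have hq2 : ‖(2:ℂ) * q‖ < 1 := by
    rw [norm_mul, hq, habsq]
    have h22 : ‖(2:ℂ)‖ = 2 := by norm_num
    rw [h22]
    linarith
  have hsumm4 : Summable fun n : ℕ => ((4:ℂ) * q) ^ n :=
    summable_geometric_of_norm_lt_one hq4
  have hsumm2 : Summable fun n : ℕ => ((2:ℂ) * q) ^ n :=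
    summable_geometric_of_norm_lt_one hq2
  have hsum4 : ∑' n : ℕ, ((4:ℂ) * q) ^ n = (1 - 4 * q)⁻¹ :=
    tsum_geometric_of_norm_lt_one hq4
  have hsum2 : ∑' n : ℕ, ((2:ℂ) * q) ^ n = (1 - 2 * q)⁻¹ :=
    tsum_geometric_of_norm_lt_one hq2
  have h24 : (2:ℂ)^(-(2*s)) = q := by
    rw [hq, show -(2*s) = 2 * (-s) by ring, aux_two_cpow]
  -- first sum
  have e1 : (∑' k : ℕ, ((((k : ℝ) + 1) ^ 2 * π ^ 2 : ℝ) : ℂ) ^ (-s)) = Z * P := by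
    have ht : ∀ k : ℕ, ((((k : ℝ) + 1) ^ 2 * π ^ 2 : ℝ) : ℂ) ^ (-s)
        = ((k:ℂ)+1) ^ (-(2*s)) * P := by
      intro k
      have h0 : (((k : ℝ) + 1) ^ 2 * π ^ 2 : ℝ) = ((k:ℝ)+1)^2 * π^2 * 4^(0:ℕ) := by norm_num
      rw [h0, aux_key s ((k:ℝ)+1) (by positivity) 0, hP]
      push_cast
      ring
    rw [tsum_congr ht, tsum_mul_right, aux_zsum _ hw]
  -- second sum
  have e2 : (∑' n : ℕ, (2 : ℂ) ^ (n + 1) *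
      ∑' k : ℕ, ((((k : ℝ) + 1 / 2) ^ 2 * π ^ 2 * (4 : ℝ) ^ (n + 1) : ℝ) : ℂ) ^ (-s))
      = (2 * ((1 - q) * Z) * P) * (1 - 2*q)⁻¹ := by
    have hinner : ∀ n : ℕ,
        (∑' k : ℕ, ((((k : ℝ) + 1 / 2) ^ 2 * π ^ 2 * (4 : ℝ) ^ (n + 1) : ℝ) : ℂ) ^ (-s))
        = ((1 - q) * Z) * (P * q ^ n) := by
      intro n
      have ht : ∀ k : ℕ, ((((k : ℝ) + 1 / 2) ^ 2 * π ^ 2 * (4 : ℝ) ^ (n + 1) : ℝ) : ℂ) ^ (-s)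
          = (2*(k:ℂ)+1) ^ (-(2*s)) * (P * q ^ n) := by
        intro k
        have h0 : (((k : ℝ) + 1 / 2) ^ 2 * π ^ 2 * (4 : ℝ) ^ (n + 1) : ℝ)
            = (2*(k:ℝ)+1)^2 * π^2 * 4^n := by ring
        rw [h0, aux_key s (2*(k:ℝ)+1) (by positivity) n, hP, hq]
        push_cast
        ring
      rw [tsum_congr ht, tsum_mul_right, aux_odd _ hw, h24]
    have ht2 : ∀ n : ℕ, (2 : ℂ) ^ (n + 1) *
        (∑' k : ℕ, ((((k : ℝ) + 1 / 2) ^ 2 * π ^ 2 * (4 : ℝ) ^ (n + 1) : ℝ) : ℂ) ^ (-s))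
        = (2 * ((1 - q) * Z) * P) * ((2:ℂ) * q) ^ n := by
      intro n
      rw [hinner n, mul_pow]
      ring
    rw [tsum_congr ht2, tsum_mul_left, hsum2]
  -- third sum
  have e3 : (∑' n : ℕ, ((2 ^ (n + 1) * (2 ^ (n + 1) - 1) : ℕ) : ℂ) *
      ∑' k : ℕ, ((((k : ℝ) + 1) ^ 2 * π ^ 2 * (4 : ℝ) ^ (n + 2) : ℝ) : ℂ) ^ (-s))
      = (4*Z*P*q^2) * (1 - 4*q)⁻¹ - (2*Z*P*q^2) * (1 - 2*q)⁻¹ := by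
    have hinner : ∀ n : ℕ,
        (∑' k : ℕ, ((((k : ℝ) + 1) ^ 2 * π ^ 2 * (4 : ℝ) ^ (n + 2) : ℝ) : ℂ) ^ (-s))
        = Z * (P * q ^ (n+2)) := by
      intro n
      have ht : ∀ k : ℕ, ((((k : ℝ) + 1) ^ 2 * π ^ 2 * (4 : ℝ) ^ (n + 2) : ℝ) : ℂ) ^ (-s)
          = ((k:ℂ)+1) ^ (-(2*s)) * (P * q ^ (n+2)) := by
        intro k
        rw [aux_key s ((k:ℝ)+1) (by positivity) (n+2), hP, hq]
        push_cast
        ring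
      rw [tsum_congr ht, tsum_mul_right, aux_zsum _ hw]
    have hterm : ∀ n : ℕ, ((2 ^ (n + 1) * (2 ^ (n + 1) - 1) : ℕ) : ℂ) * (Z * (P * q ^ (n+2)))
        = (4*Z*P*q^2) * ((4:ℂ)*q) ^ n - (2*Z*P*q^2) * ((2:ℂ)*q) ^ n := by
      intro n
      have h1 : (1:ℕ) ≤ 2^(n+1) := Nat.one_le_two_pow
      have hc : ((2 ^ (n + 1) * (2 ^ (n + 1) - 1) : ℕ) : ℂ) = (4:ℂ)^(n+1) - 2^(n+1) := by
        push_cast [h1]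
        rw [show (4:ℂ) = 2*2 by norm_num, mul_pow]
        ring
      rw [hc, mul_pow, mul_pow]
      ring
    calc (∑' n : ℕ, ((2 ^ (n + 1) * (2 ^ (n + 1) - 1) : ℕ) : ℂ) *
        ∑' k : ℕ, ((((k : ℝ) + 1) ^ 2 * π ^ 2 * (4 : ℝ) ^ (n + 2) : ℝ) : ℂ) ^ (-s))
        = ∑' n : ℕ, ((4*Z*P*q^2) * ((4:ℂ)*q) ^ n - (2*Z*P*q^2) * ((2:ℂ)*q) ^ n) := by
          exact tsum_congr fun n => by rw [hinner n, hterm n]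
      _ = (4*Z*P*q^2) * (1 - 4*q)⁻¹ - (2*Z*P*q^2) * (1 - 2*q)⁻¹ := by
          rw [(hsumm4.mul_left _).tsum_sub (hsumm2.mul_left _),
            tsum_mul_left, tsum_mul_left, hsum4, hsum2]
  -- fourth sum
  have e4 : (∑' n : ℕ, ((2 ^ n * (2 ^ (n + 1) - 1) : ℕ) : ℂ) *
      ∑' k : ℕ, ((((k : ℝ) + 1) ^ 2 * π ^ 2 * (4 : ℝ) ^ (n + 2) / 4 : ℝ) : ℂ) ^ (-s))
      = (2*Z*P*q) * (1 - 4*q)⁻¹ - (Z*P*q) * (1 - 2*q)⁻¹ := by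
    have hinner : ∀ n : ℕ,
        (∑' k : ℕ, ((((k : ℝ) + 1) ^ 2 * π ^ 2 * (4 : ℝ) ^ (n + 2) / 4 : ℝ) : ℂ) ^ (-s))
        = Z * (P * q ^ (n+1)) := by
      intro n
      have ht : ∀ k : ℕ, ((((k : ℝ) + 1) ^ 2 * π ^ 2 * (4 : ℝ) ^ (n + 2) / 4 : ℝ) : ℂ) ^ (-s)
          = ((k:ℂ)+1) ^ (-(2*s)) * (P * q ^ (n+1)) := by
        intro k
        have h0 : (((k : ℝ) + 1) ^ 2 * π ^ 2 * (4 : ℝ) ^ (n + 2) / 4 : ℝ)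
            = ((k:ℝ)+1)^2 * π^2 * 4^(n+1) := by ring
        rw [h0, aux_key s ((k:ℝ)+1) (by positivity) (n+1), hP, hq]
        push_cast
        ring
      rw [tsum_congr ht, tsum_mul_right, aux_zsum _ hw]
    have hterm : ∀ n : ℕ, ((2 ^ n * (2 ^ (n + 1) - 1) : ℕ) : ℂ) * (Z * (P * q ^ (n+1)))
        = (2*Z*P*q) * ((4:ℂ)*q) ^ n - (Z*P*q) * ((2:ℂ)*q) ^ n := by
      intro n
      have h1 : (1:ℕ) ≤ 2^(n+1) := Nat.one_le_two_pow
      have hc : ((2 ^ n * (2 ^ (n + 1) - 1) : ℕ) : ℂ) = 2*(4:ℂ)^n - 2^n := by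
        push_cast [h1]
        rw [show (4:ℂ) = 2*2 by norm_num, mul_pow]
        ring
      rw [hc, mul_pow, mul_pow]
      ring
    calc (∑' n : ℕ, ((2 ^ n * (2 ^ (n + 1) - 1) : ℕ) : ℂ) *
        ∑' k : ℕ, ((((k : ℝ) + 1) ^ 2 * π ^ 2 * (4 : ℝ) ^ (n + 2) / 4 : ℝ) : ℂ) ^ (-s))
        = ∑' n : ℕ, ((2*Z*P*q) * ((4:ℂ)*q) ^ n - (Z*P*q) * ((2:ℂ)*q) ^ n) := by
          exact tsum_congr fun n => by rw [hinner n, hterm n]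
      _ = (2*Z*P*q) * (1 - 4*q)⁻¹ - (Z*P*q) * (1 - 2*q)⁻¹ := by
          rw [(hsumm4.mul_left _).tsum_sub (hsumm2.mul_left _),
            tsum_mul_left, tsum_mul_left, hsum4, hsum2]
  rw [e1, e2, e3, e4]
  -- final algebra
  have ha0 : (4:ℂ)^s ≠ 0 := by
    simp [Complex.cpow_eq_zero_iff]
  have hqinv : q = ((4:ℂ)^s)⁻¹ := by rw [hq, Complex.cpow_neg]
  have h2sm1 : (2:ℂ)^(2*s-1) = (4:ℂ)^s / 2 := by
    rw [Complex.cpow_sub _ _ (two_ne_zero), aux_two_cpow, Complex.cpow_one]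
  have h2sp1 : (2:ℂ)^(2*s+1) = (4:ℂ)^s * 2 := by
    rw [Complex.cpow_add _ _ (two_ne_zero), aux_two_cpow, Complex.cpow_one]
  have hPinv : P = (((π : ℝ) : ℂ) ^ (2*s))⁻¹ := by rw [hP, Complex.cpow_neg]
  have hpine : ((π : ℝ) : ℂ) ^ (2*s) ≠ 0 := by
    simp [Complex.cpow_eq_zero_iff, Real.pi_ne_zero]
  have hna : 4 < ‖(4:ℂ)^s‖ := by
    rw [show (4:ℂ) = ((4:ℝ):ℂ) by norm_num,
      Complex.norm_cpow_eq_rpow_re_of_pos (by norm_num)]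
    calc (4:ℝ) = 4 ^ (1:ℝ) := by norm_num
      _ < 4 ^ s.re := (Real.rpow_lt_rpow_left_iff (by norm_num)).mpr hs
  have h4ne : (4:ℂ)^s - 4 ≠ 0 := by
    intro h
    rw [sub_eq_zero] at h
    rw [h] at hna
    norm_num at hna
  have h2ne : (4:ℂ)^s - 2 ≠ 0 := by
    intro h
    rw [sub_eq_zero] at h
    rw [h] at hna
    norm_num at hna
  have hrw2 : 1 - 2*q = ((4:ℂ)^s - 2) * ((4:ℂ)^s)⁻¹ := by
    rw [hqinv]; field_simp
  have hrw4 : 1 - 4*q = ((4:ℂ)^s - 4) * ((4:ℂ)^s)⁻¹ := by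
    rw [hqinv]; field_simp
  have hden2 : 1 - 2*q ≠ 0 := by
    rw [hrw2]; exact mul_ne_zero h2ne (inv_ne_zero ha0)
  have hden4 : 1 - 4*q ≠ 0 := by
    rw [hrw4]; exact mul_ne_zero h4ne (inv_ne_zero ha0)
  rw [h2sm1, h2sp1, hPinv, hqinv]
  exact aux_alg Z ((π:ℝ) ^ (2*s) : ℂ) ((4:ℂ)^s) ha0 h2ne h4ne hpine
end

section
/- Let j n = 2 for all n ≥ 1, so that I n = 2^n, and for t > 0 define Z(t) = Σ_{k≥0} e^{−k²π²t} + Σ_{n≥1} 2^n Σ_{k≥0} e^{−(k+1/2)²π²·4^n·t} + Σ_{n≥2} 2^{n−1}(2^{n−1} − 1) Σ_{k≥1} e^{−k²π²·4^n·t} + Σ_{n≥2} 2^{n−2}(2^{n−1} − 1) Σ_{k≥1} e^{−k²π²·4^n·t/4}. Then there exist constants c, C > 0 such that c/t ≤ Z(t) ≤ C/t for all t ∈ (0, 1]. In particular the spectral dimension of the j = 2 Laakso space equals 2. -/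
open Real


lemma my_exp_neg_le_inv {x : ℝ} (hx : 0 < x) : Real.exp (-x) ≤ 1 / x := by
  rw [Real.exp_neg, one_div]
  exact inv_anti₀ hx (by linarith [Real.add_one_le_exp x])

lemma my_exp_shift (x : ℝ) (k : ℕ) :
    Real.exp (-(((k:ℝ)+1) * x)) = Real.exp (-x) * Real.exp (-x) ^ k := by
  rw [← Real.exp_nat_mul, ← Real.exp_add]
  congr 1
  ring

lemma my_summable_exp_succ {x : ℝ} (hx : 0 < x) :
    Summable (fun k : ℕ => Real.exp (-(((k:ℝ)+1) * x))) := by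
  have hg : Summable (fun k : ℕ => Real.exp (-x) ^ k) :=
    summable_geometric_of_lt_one (Real.exp_pos _).le (Real.exp_lt_one_iff.2 (by linarith))
  exact (hg.mul_left (Real.exp (-x))).congr (fun k => (my_exp_shift x k).symm)

lemma my_tsum_exp_succ_le {x : ℝ} (hx : 0 < x) :
    ∑' k : ℕ, Real.exp (-(((k:ℝ)+1) * x)) ≤ 1 / x := by
  have hlt : Real.exp (-x) < 1 := Real.exp_lt_one_iff.2 (by linarith)
  have h0 : (0:ℝ) < 1 - Real.exp (-x) := by linarith
  have heq : ∑' k : ℕ, Real.exp (-(((k:ℝ)+1) * x))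
      = Real.exp (-x) * (1 - Real.exp (-x))⁻¹ := by
    rw [tsum_congr (my_exp_shift x), tsum_mul_left,
      tsum_geometric_of_lt_one (Real.exp_pos _).le hlt]
  rw [heq, ← div_eq_mul_inv, div_le_div_iff₀ h0 hx]
  have hmul : Real.exp (-x) * Real.exp x = 1 := by rw [← Real.exp_add]; simp
  nlinarith [Real.add_one_le_exp x, (Real.exp_pos (-x)).le,
    mul_le_mul_of_nonneg_left (Real.add_one_le_exp x) (Real.exp_pos (-x)).le]


lemma my_one_sub_exp_inv_le {x : ℝ} (hx : 0 < x) :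
    (1 - Real.exp (-x))⁻¹ ≤ 1/x + 1 := by
  have hlt : Real.exp (-x) < 1 := Real.exp_lt_one_iff.2 (by linarith)
  have h0 : (0:ℝ) < 1 - Real.exp (-x) := by linarith
  rw [show 1/x + 1 = (1+x)/x by field_simp, inv_eq_one_div, div_le_div_iff₀ h0 hx]
  nlinarith [mul_le_mul_of_nonneg_left (Real.add_one_le_exp x) (Real.exp_pos (-x)).le,
    (by rw [← Real.exp_add]; simp : Real.exp (-x) * Real.exp x = 1)]

lemma my_summable_geom {x : ℝ} (hx : 0 < x) :
    Summable (fun k : ℕ => Real.exp (-x) ^ k) :=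
  summable_geometric_of_lt_one (Real.exp_pos _).le (Real.exp_lt_one_iff.2 (by linarith))

-- sum over k from 0 of exp(-(k^2 x))
lemma my_summable_sq0 {x : ℝ} (hx : 0 < x) :
    Summable (fun k : ℕ => Real.exp (-((k:ℝ)^2 * x))) := by
  refine Summable.of_nonneg_of_le (fun k => (Real.exp_pos _).le) (fun k => ?_) (my_summable_geom hx)
  rw [← Real.exp_nat_mul]
  apply Real.exp_le_exp.2
  have hk : (k:ℝ) ≤ (k:ℝ)^2 := by
    have := Nat.le_self_pow (two_ne_zero) k
    exact_mod_cast this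
  nlinarith [mul_le_mul_of_nonneg_right hk hx.le]

lemma my_tsum_sq0_le {x : ℝ} (hx : 0 < x) :
    ∑' k : ℕ, Real.exp (-((k:ℝ)^2 * x)) ≤ 1/x + 1 := by
  have hlt : Real.exp (-x) < 1 := Real.exp_lt_one_iff.2 (by linarith)
  calc ∑' k : ℕ, Real.exp (-((k:ℝ)^2 * x)) ≤ ∑' k : ℕ, Real.exp (-x) ^ k := by
        refine Summable.tsum_le_tsum (fun k => ?_) (my_summable_sq0 hx) (my_summable_geom hx)
        rw [← Real.exp_nat_mul]
        apply Real.exp_le_exp.2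
        have hk : (k:ℝ) ≤ (k:ℝ)^2 := by
          have := Nat.le_self_pow (two_ne_zero) k
          exact_mod_cast this
        nlinarith [mul_le_mul_of_nonneg_right hk hx.le]
    _ = (1 - Real.exp (-x))⁻¹ := tsum_geometric_of_lt_one (Real.exp_pos _).le hlt
    _ ≤ 1/x + 1 := my_one_sub_exp_inv_le hx

-- half-integer sums
lemma my_summable_half {x : ℝ} (hx : 0 < x) :
    Summable (fun k : ℕ => Real.exp (-(((k:ℝ)+1/2)^2 * x))) := by
  refine Summable.of_nonneg_of_le (fun k => (Real.exp_pos _).le) (fun k => ?_)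
    (my_summable_geom hx)
  rw [← Real.exp_nat_mul]
  apply Real.exp_le_exp.2
  nlinarith [sq_nonneg ((k:ℝ)), Nat.cast_nonneg (α := ℝ) k]

lemma my_tsum_half_le {x : ℝ} (hx : 0 < x) :
    ∑' k : ℕ, Real.exp (-(((k:ℝ)+1/2)^2 * x)) ≤ 5 / x := by
  have hlt : Real.exp (-x) < 1 := Real.exp_lt_one_iff.2 (by linarith)
  have step1 : ∑' k : ℕ, Real.exp (-(((k:ℝ)+1/2)^2 * x))
      ≤ ∑' k : ℕ, Real.exp (-(x/4)) * Real.exp (-x) ^ k := by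
    refine Summable.tsum_le_tsum (fun k => ?_) (my_summable_half hx)
      ((my_summable_geom hx).mul_left _)
    rw [← Real.exp_nat_mul, ← Real.exp_add]
    apply Real.exp_le_exp.2
    nlinarith [sq_nonneg ((k:ℝ)), Nat.cast_nonneg (α := ℝ) k]
  have step2 : ∑' k : ℕ, Real.exp (-(x/4)) * Real.exp (-x) ^ k
      = Real.exp (-(x/4)) * (1 - Real.exp (-x))⁻¹ := by
    rw [tsum_mul_left, tsum_geometric_of_lt_one (Real.exp_pos _).le hlt]
  have hA1 : Real.exp (-(x/4)) ≤ 1 := Real.exp_le_one_iff.2 (by linarith)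
  have hA2 : Real.exp (-(x/4)) ≤ 4/x := by
    have := my_exp_neg_le_inv (x := x/4) (by linarith)
    rw [one_div] at this
    calc Real.exp (-(x/4)) ≤ (x/4)⁻¹ := this
      _ = 4/x := by field_simp
  have hB : (1 - Real.exp (-x))⁻¹ ≤ 1/x + 1 := my_one_sub_exp_inv_le hx
  have hB0 : (0:ℝ) ≤ (1 - Real.exp (-x))⁻¹ := by
    have : (0:ℝ) < 1 - Real.exp (-x) := by linarith
    positivity
  calc ∑' k : ℕ, Real.exp (-(((k:ℝ)+1/2)^2 * x))
      ≤ Real.exp (-(x/4)) * (1 - Real.exp (-x))⁻¹ := by rw [← step2]; exact step1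
    _ ≤ 5 / x := by
        have h1 : Real.exp (-(x/4)) * (1 - Real.exp (-x))⁻¹
            ≤ Real.exp (-(x/4)) * (1/x + 1) :=
          mul_le_mul_of_nonneg_left hB (Real.exp_pos _).le
        have h2 : Real.exp (-(x/4)) * (1/x + 1)
            = Real.exp (-(x/4)) * (1/x) + Real.exp (-(x/4)) := by ring
        have h3 : Real.exp (-(x/4)) * (1/x) ≤ 1 * (1/x) :=
          mul_le_mul_of_nonneg_right hA1 (by positivity)
        have h4 : Real.exp (-(x/4)) ≤ 4/x := hA2
        calc Real.exp (-(x/4)) * (1 - Real.exp (-x))⁻¹ ≤ Real.exp (-(x/4)) * (1/x + 1) := h1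
          _ = Real.exp (-(x/4)) * (1/x) + Real.exp (-(x/4)) := h2
          _ ≤ 1 * (1/x) + 4/x := add_le_add h3 h4
          _ = 5 / x := by field_simp; ring


-- squares starting from 1
lemma my_summable_sq {x : ℝ} (hx : 0 < x) :
    Summable (fun k : ℕ => Real.exp (-(((k:ℝ)+1)^2 * x))) := by
  refine Summable.of_nonneg_of_le (fun k => (Real.exp_pos _).le) (fun k => ?_)
    (my_summable_exp_succ hx)
  apply Real.exp_le_exp.2
  have hk : (0:ℝ) ≤ (k:ℝ) := Nat.cast_nonneg k
  have h1 : ((k:ℝ)+1) ≤ ((k:ℝ)+1)^2 := by nlinarith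
  nlinarith [mul_le_mul_of_nonneg_right h1 hx.le]

lemma my_tsum_sq_le {x : ℝ} (hx : 0 < x) :
    ∑' k : ℕ, Real.exp (-(((k:ℝ)+1)^2 * x)) ≤ Real.exp 1 / (2 * Real.sqrt x) := by
  have hs : 0 < Real.sqrt x := Real.sqrt_pos.2 hx
  have hs2 : Real.sqrt x * Real.sqrt x = x := Real.mul_self_sqrt hx.le
  calc ∑' k : ℕ, Real.exp (-(((k:ℝ)+1)^2 * x))
      ≤ ∑' k : ℕ, Real.exp 1 * Real.exp (-(((k:ℝ)+1) * (2 * Real.sqrt x))) := by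
        refine Summable.tsum_le_tsum (fun k => ?_) (my_summable_sq hx)
          ((my_summable_exp_succ (by positivity)).mul_left _)
        rw [← Real.exp_add]
        apply Real.exp_le_exp.2
        nlinarith [sq_nonneg (((k:ℝ)+1) * Real.sqrt x - 1)]
    _ = Real.exp 1 * ∑' k : ℕ, Real.exp (-(((k:ℝ)+1) * (2 * Real.sqrt x))) := tsum_mul_left
    _ ≤ Real.exp 1 * (1 / (2 * Real.sqrt x)) :=
        mul_le_mul_of_nonneg_left (my_tsum_exp_succ_le (by positivity)) (Real.exp_pos _).le
    _ = Real.exp 1 / (2 * Real.sqrt x) := by ring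

lemma my_tsum_sq_le' {y : ℝ} (hy : 0 < y) :
    ∑' k : ℕ, Real.exp (-(((k:ℝ)+1)^2 * (2*y)))
      ≤ Real.exp 1 * Real.exp (-y) / (2 * Real.sqrt y) := by
  have h2y : (0:ℝ) < 2*y := by linarith
  calc ∑' k : ℕ, Real.exp (-(((k:ℝ)+1)^2 * (2*y)))
      ≤ ∑' k : ℕ, Real.exp (-y) * Real.exp (-(((k:ℝ)+1)^2 * y)) := by
        refine Summable.tsum_le_tsum (fun k => ?_) (my_summable_sq h2y)
          ((my_summable_sq hy).mul_left _)
        rw [← Real.exp_add]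
        apply Real.exp_le_exp.2
        have h1 : (1:ℝ) ≤ ((k:ℝ)+1)^2 := by nlinarith [Nat.cast_nonneg (α := ℝ) k]
        nlinarith [mul_le_mul_of_nonneg_right h1 hy.le]
    _ = Real.exp (-y) * ∑' k : ℕ, Real.exp (-(((k:ℝ)+1)^2 * y)) := tsum_mul_left
    _ ≤ Real.exp (-y) * (Real.exp 1 / (2 * Real.sqrt y)) :=
        mul_le_mul_of_nonneg_left (my_tsum_sq_le hy) (Real.exp_pos _).le
    _ = Real.exp 1 * Real.exp (-y) / (2 * Real.sqrt y) := by ring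

-- key pointwise telescoping inequality
lemma my_tele_pointwise {s : ℝ} (hs : 0 ≤ s) :
    s * Real.exp (-(s^2)) ≤ 4 * (Real.exp (-(s/2)) - Real.exp (-s)) := by
  have hexp14 : Real.exp (4⁻¹) ≤ 2 := by
    have h4 : (Real.exp 4⁻¹) ^ 4 = Real.exp 1 := by
      rw [← Real.exp_nat_mul]; norm_num
    have h5 : (Real.exp 4⁻¹) ^ 4 ≤ 2 ^ 4 := by
      rw [h4]; nlinarith [Real.exp_one_lt_d9]
    exact le_of_pow_le_pow_left₀ (by norm_num) (by norm_num) h5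
  have key : Real.exp (-(s^2)) ≤ 2 * Real.exp (-s) := by
    have heq : Real.exp (-(s^2)) = Real.exp (s - s^2) * Real.exp (-s) := by
      rw [← Real.exp_add]; ring_nf
    have h1 : Real.exp (s - s^2) ≤ Real.exp 4⁻¹ := by
      apply Real.exp_le_exp.2; nlinarith [sq_nonneg (s - 1/2)]
    rw [heq]
    exact mul_le_mul_of_nonneg_right (h1.trans hexp14) (Real.exp_pos _).le
  have h2 : Real.exp (-(s/2)) - Real.exp (-s) = Real.exp (-s) * (Real.exp (s/2) - 1) := by
    rw [mul_sub, ← Real.exp_add]; ring_nf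
  have h3 : s/2 ≤ Real.exp (s/2) - 1 := by linarith [Real.add_one_le_exp (s/2)]
  have h4 : 4 * (Real.exp (-s) * (s/2)) ≤ 4 * (Real.exp (-s) * (Real.exp (s/2) - 1)) := by
    have := mul_le_mul_of_nonneg_left h3 (Real.exp_pos (-s)).le
    linarith
  calc s * Real.exp (-(s^2)) ≤ s * (2 * Real.exp (-s)) := mul_le_mul_of_nonneg_left key hs
    _ = 4 * (Real.exp (-s) * (s/2)) := by ring
    _ ≤ 4 * (Real.exp (-s) * (Real.exp (s/2) - 1)) := h4
    _ = 4 * (Real.exp (-(s/2)) - Real.exp (-s)) := by rw [h2]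

lemma my_pow_two_sq (n : ℕ) : ((2:ℝ)^n)^2 = 4^n := by
  rw [← pow_mul, mul_comm, pow_mul]; norm_num

lemma my_sqrt_a4 {a : ℝ} (ha : 0 < a) (n : ℕ) :
    Real.sqrt (a * 4^n) = Real.sqrt a * 2^n := by
  rw [Real.sqrt_mul ha.le, ← my_pow_two_sq n, Real.sqrt_sq (by positivity)]

lemma my_tele_sum_le {a : ℝ} (ha : 0 < a) (N : ℕ) :
    ∑ n ∈ Finset.range N, Real.sqrt (a * 4^n) * Real.exp (-(a * 4^n)) ≤ 4 := by
  set v : ℕ → ℝ := fun n => Real.exp (-(Real.sqrt a * 2^n / 2)) with hv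
  have hpt : ∀ n : ℕ, Real.sqrt (a * 4^n) * Real.exp (-(a * 4^n)) ≤ 4 * (v n - v (n+1)) := by
    intro n
    have hs0 : (0:ℝ) ≤ Real.sqrt a * 2^n := by positivity
    have hsq : (Real.sqrt a * 2^n)^2 = a * 4^n := by
      rw [mul_pow, sq (Real.sqrt a), Real.mul_self_sqrt ha.le, my_pow_two_sq]
    have hmain := my_tele_pointwise hs0
    rw [hsq] at hmain
    have hv1 : v (n+1) = Real.exp (-(Real.sqrt a * 2^n)) := by
      simp only [hv]; congr 1; ring
    have hv0 : v n = Real.exp (-(Real.sqrt a * 2^n / 2)) := rfl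
    rw [my_sqrt_a4 ha n, hv0, hv1]
    exact hmain
  calc ∑ n ∈ Finset.range N, Real.sqrt (a * 4^n) * Real.exp (-(a * 4^n))
      ≤ ∑ n ∈ Finset.range N, 4 * (v n - v (n+1)) :=
        Finset.sum_le_sum (fun n _ => hpt n)
    _ = 4 * (v 0 - v N) := by rw [← Finset.mul_sum, Finset.sum_range_sub' v]
    _ ≤ 4 := by
        have h0 : v 0 ≤ 1 := Real.exp_le_one_iff.2 (neg_nonpos.2 (by positivity))
        have hN : 0 < v N := Real.exp_pos _
        nlinarith

lemma my_tele_summable {a : ℝ} (ha : 0 < a) :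
    Summable (fun n : ℕ => Real.sqrt (a * 4^n) * Real.exp (-(a * 4^n))) :=
  summable_of_sum_range_le (fun n => by positivity) (my_tele_sum_le ha)

lemma my_tele_tsum_le {a : ℝ} (ha : 0 < a) :
    ∑' n : ℕ, Real.sqrt (a * 4^n) * Real.exp (-(a * 4^n)) ≤ 4 :=
  tsum_le_of_sum_range_le (fun n => by positivity) (my_tele_sum_le ha)

set_option maxHeartbeats 2000000 in
/-- The heat-kernel trace of the `j = 2` Laakso space satisfies `Z(t) ≍ 1/t` for
`t ∈ (0, 1]`; in particular its spectral dimension equals `2`. -/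
theorem laakso_heat_trace_j2
    (Z : ℝ → ℝ)
    (hZ : ∀ t : ℝ, Z t =
      (∑' k : ℕ, Real.exp (-((k : ℝ) ^ 2 * π ^ 2) * t)) +
      (∑' n : ℕ, (2 : ℝ) ^ (n + 1) *
        ∑' k : ℕ, Real.exp (-(((k : ℝ) + 1 / 2) ^ 2 * π ^ 2 * (4 : ℝ) ^ (n + 1)) * t)) +
      (∑' n : ℕ, ((2 ^ (n + 1) * (2 ^ (n + 1) - 1) : ℕ) : ℝ) *
        ∑' k : ℕ, Real.exp (-(((k : ℝ) + 1) ^ 2 * π ^ 2 * (4 : ℝ) ^ (n + 2)) * t)) +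
      (∑' n : ℕ, ((2 ^ n * (2 ^ (n + 1) - 1) : ℕ) : ℝ) *
        ∑' k : ℕ, Real.exp (-(((k : ℝ) + 1) ^ 2 * π ^ 2 * (4 : ℝ) ^ (n + 2) / 4) * t))) :
    ∃ c C : ℝ, 0 < c ∧ 0 < C ∧
      ∀ t ∈ Set.Ioc (0 : ℝ) 1, c / t ≤ Z t ∧ Z t ≤ C / t := by
  have hπ := Real.pi_pos
  refine ⟨Real.exp (-(16*π^2))/2, (6 + π^2 + 3*Real.exp 1)/π^2,
    by positivity, by positivity, ?_⟩
  intro t ht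
  obtain ⟨ht0, ht1⟩ := ht
  -- canonical rewriting of the four series
  have hZt : Z t =
      (∑' k : ℕ, Real.exp (-((k:ℝ)^2 * (π^2 * t)))) +
      (∑' n : ℕ, (2:ℝ)^(n+1) *
        ∑' k : ℕ, Real.exp (-(((k:ℝ)+1/2)^2 * (π^2 * 4^(n+1) * t)))) +
      (∑' n : ℕ, ((2^(n+1) * (2^(n+1) - 1) : ℕ) : ℝ) *
        ∑' k : ℕ, Real.exp (-(((k:ℝ)+1)^2 * (2*(8*π^2*t*4^n))))) +
      (∑' n : ℕ, ((2^n * (2^(n+1) - 1) : ℕ) : ℝ) *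
        ∑' k : ℕ, Real.exp (-(((k:ℝ)+1)^2 * (2*(2*π^2*t*4^n))))) := by
    rw [hZ t]
    congr 1
    · congr 1
      · congr 1
        · exact tsum_congr fun k => by
            rw [show -((k:ℝ)^2*π^2)*t = -((k:ℝ)^2*(π^2*t)) by ring]
        · exact tsum_congr fun n => by
            refine congrArg _ (tsum_congr fun k => ?_)
            rw [show -(((k:ℝ)+1/2)^2*π^2*(4:ℝ)^(n+1))*t
              = -(((k:ℝ)+1/2)^2*(π^2*4^(n+1)*t)) by ring]
      · exact tsum_congr fun n => by
          refine congrArg _ (tsum_congr fun k => ?_)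
          rw [show -(((k:ℝ)+1)^2*π^2*(4:ℝ)^(n+2))*t
            = -(((k:ℝ)+1)^2*(2*(8*π^2*t*4^n))) by ring]
    · exact tsum_congr fun n => by
        refine congrArg _ (tsum_congr fun k => ?_)
        rw [show -(((k:ℝ)+1)^2*π^2*(4:ℝ)^(n+2)/4)*t
          = -(((k:ℝ)+1)^2*(2*(2*π^2*t*4^n))) by ring]
  set f2 : ℕ → ℝ := fun n => (2:ℝ)^(n+1) *
    ∑' k : ℕ, Real.exp (-(((k:ℝ)+1/2)^2 * (π^2 * 4^(n+1) * t))) with hf2def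
  set f3 : ℕ → ℝ := fun n => ((2^(n+1) * (2^(n+1) - 1) : ℕ) : ℝ) *
    ∑' k : ℕ, Real.exp (-(((k:ℝ)+1)^2 * (2*(8*π^2*t*4^n)))) with hf3def
  set f4 : ℕ → ℝ := fun n => ((2^n * (2^(n+1) - 1) : ℕ) : ℝ) *
    ∑' k : ℕ, Real.exp (-(((k:ℝ)+1)^2 * (2*(2*π^2*t*4^n)))) with hf4def
  -- nonnegativity
  have hf2nn : ∀ n, 0 ≤ f2 n := fun n =>
    mul_nonneg (by positivity) (tsum_nonneg fun k => (Real.exp_pos _).le)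
  have hf3nn : ∀ n, 0 ≤ f3 n := fun n =>
    mul_nonneg (Nat.cast_nonneg _) (tsum_nonneg fun k => (Real.exp_pos _).le)
  have hf4nn : ∀ n, 0 ≤ f4 n := fun n =>
    mul_nonneg (Nat.cast_nonneg _) (tsum_nonneg fun k => (Real.exp_pos _).le)
  -- ===== bounds for series 2 =====
  have hb2 : ∀ n, f2 n ≤ (5/(2*π^2*t)) * (2⁻¹:ℝ)^n := by
    intro n
    have hx : 0 < π^2 * 4^(n+1) * t := by positivity
    have h1 : f2 n ≤ (2:ℝ)^(n+1) * (5/(π^2 * 4^(n+1) * t)) :=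
      mul_le_mul_of_nonneg_left (my_tsum_half_le hx) (by positivity)
    refine h1.trans_eq ?_
    have h4 : (4:ℝ)^(n+1) = 2^(n+1) * 2^(n+1) := by
      rw [← mul_pow]; norm_num
    rw [h4]
    have h2 : ((2:ℝ)^(n+1)) ≠ 0 := by positivity
    field_simp
    rw [pow_succ, mul_comm, ← mul_assoc, ← mul_pow]; norm_num
  have hg2sum : Summable (fun n : ℕ => (5/(2*π^2*t)) * (2⁻¹:ℝ)^n) :=
    (summable_geometric_of_lt_one (by norm_num) (by norm_num)).mul_left _
  have hf2sum : Summable f2 := Summable.of_nonneg_of_le hf2nn hb2 hg2sum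
  have hU2 : ∑' n, f2 n ≤ 5/(π^2*t) := by
    calc ∑' n, f2 n ≤ ∑' n : ℕ, (5/(2*π^2*t)) * (2⁻¹:ℝ)^n :=
          Summable.tsum_le_tsum hb2 hf2sum hg2sum
      _ = (5/(2*π^2*t)) * (1 - 2⁻¹)⁻¹ := by
          rw [tsum_mul_left, tsum_geometric_of_lt_one (by norm_num) (by norm_num)]
      _ = 5/(π^2*t) := by norm_num; field_simp
  -- ===== bounds for series 3 =====
  have ha3 : (0:ℝ) < 8*π^2*t := by positivity
  have hb3 : ∀ n, f3 n ≤ (2*Real.exp 1/(8*π^2*t)) *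
      (Real.sqrt (8*π^2*t*4^n) * Real.exp (-(8*π^2*t*4^n))) := by
    intro n
    have hy : (0:ℝ) < 8*π^2*t*4^n := by positivity
    have hcast : ((2^(n+1) * (2^(n+1) - 1) : ℕ) : ℝ) ≤ (4:ℝ)^(n+1) := by
      have hnat : (2^(n+1) * (2^(n+1) - 1) : ℕ) ≤ 4^(n+1) := by
        calc (2^(n+1) * (2^(n+1) - 1) : ℕ) ≤ 2^(n+1) * 2^(n+1) :=
              Nat.mul_le_mul_left _ (Nat.sub_le _ _)
          _ = 4^(n+1) := by rw [← Nat.mul_pow]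
      calc ((2^(n+1) * (2^(n+1) - 1) : ℕ) : ℝ) ≤ ((4^(n+1) : ℕ) : ℝ) :=
            Nat.cast_le.2 hnat
        _ = (4:ℝ)^(n+1) := by push_cast; ring
    have h1 : f3 n ≤ (4:ℝ)^(n+1) *
        (Real.exp 1 * Real.exp (-(8*π^2*t*4^n)) / (2 * Real.sqrt (8*π^2*t*4^n))) :=
      mul_le_mul hcast (my_tsum_sq_le' hy)
        (tsum_nonneg fun k => (Real.exp_pos _).le) (by positivity)
    refine h1.trans_eq ?_
    have hs : 0 < Real.sqrt (8*π^2*t*4^n) := Real.sqrt_pos.2 hy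
    have hsq : Real.sqrt (8*π^2*t*4^n) * Real.sqrt (8*π^2*t*4^n) = 8*π^2*t*4^n :=
      Real.mul_self_sqrt hy.le
    rw [div_mul_eq_mul_div, mul_div_assoc', div_eq_div_iff (by positivity) ha3.ne']
    linear_combination (-4 * Real.exp 1 * Real.exp (-(8*π^2*t*4^n))) * hsq
  have hw3sum := my_tele_summable ha3
  have hw3le := my_tele_tsum_le ha3
  have hf3sum : Summable f3 :=
    Summable.of_nonneg_of_le hf3nn hb3 (hw3sum.mul_left _)
  have hU3 : ∑' n, f3 n ≤ Real.exp 1/(π^2*t) := by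
    calc ∑' n, f3 n ≤ ∑' n : ℕ, (2*Real.exp 1/(8*π^2*t)) *
          (Real.sqrt (8*π^2*t*4^n) * Real.exp (-(8*π^2*t*4^n))) :=
          Summable.tsum_le_tsum hb3 hf3sum (hw3sum.mul_left _)
      _ = (2*Real.exp 1/(8*π^2*t)) * ∑' n : ℕ,
          (Real.sqrt (8*π^2*t*4^n) * Real.exp (-(8*π^2*t*4^n))) := tsum_mul_left
      _ ≤ (2*Real.exp 1/(8*π^2*t)) * 4 :=
          mul_le_mul_of_nonneg_left hw3le (by positivity)
      _ = Real.exp 1/(π^2*t) := by field_simp; ring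
  -- ===== bounds for series 4 =====
  have ha4 : (0:ℝ) < 2*π^2*t := by positivity
  have hb4 : ∀ n, f4 n ≤ (Real.exp 1/(2*π^2*t)) *
      (Real.sqrt (2*π^2*t*4^n) * Real.exp (-(2*π^2*t*4^n))) := by
    intro n
    have hy : (0:ℝ) < 2*π^2*t*4^n := by positivity
    have hcast : ((2^n * (2^(n+1) - 1) : ℕ) : ℝ) ≤ 2*(4:ℝ)^n := by
      have hnat : (2^n * (2^(n+1) - 1) : ℕ) ≤ 2*4^n := by
        calc (2^n * (2^(n+1) - 1) : ℕ) ≤ 2^n * 2^(n+1) :=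
              Nat.mul_le_mul_left _ (Nat.sub_le _ _)
          _ = 2*(2^n*2^n) := by rw [pow_succ]; ring
          _ = 2*4^n := by rw [← Nat.mul_pow]
      calc ((2^n * (2^(n+1) - 1) : ℕ) : ℝ) ≤ ((2*4^n : ℕ) : ℝ) := Nat.cast_le.2 hnat
        _ = 2*(4:ℝ)^n := by push_cast; ring
    have h1 : f4 n ≤ (2*(4:ℝ)^n) *
        (Real.exp 1 * Real.exp (-(2*π^2*t*4^n)) / (2 * Real.sqrt (2*π^2*t*4^n))) :=
      mul_le_mul hcast (my_tsum_sq_le' hy)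
        (tsum_nonneg fun k => (Real.exp_pos _).le) (by positivity)
    refine h1.trans_eq ?_
    have hs : 0 < Real.sqrt (2*π^2*t*4^n) := Real.sqrt_pos.2 hy
    have hsq : Real.sqrt (2*π^2*t*4^n) * Real.sqrt (2*π^2*t*4^n) = 2*π^2*t*4^n :=
      Real.mul_self_sqrt hy.le
    rw [div_mul_eq_mul_div, mul_div_assoc', div_eq_div_iff (by positivity) ha4.ne']
    linear_combination (-2 * Real.exp 1 * Real.exp (-(2*π^2*t*4^n))) * hsq
  have hw4sum := my_tele_summable ha4
  have hw4le := my_tele_tsum_le ha4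
  have hf4sum : Summable f4 :=
    Summable.of_nonneg_of_le hf4nn hb4 (hw4sum.mul_left _)
  have hU4 : ∑' n, f4 n ≤ 2*Real.exp 1/(π^2*t) := by
    calc ∑' n, f4 n ≤ ∑' n : ℕ, (Real.exp 1/(2*π^2*t)) *
          (Real.sqrt (2*π^2*t*4^n) * Real.exp (-(2*π^2*t*4^n))) :=
          Summable.tsum_le_tsum hb4 hf4sum (hw4sum.mul_left _)
      _ = (Real.exp 1/(2*π^2*t)) * ∑' n : ℕ,
          (Real.sqrt (2*π^2*t*4^n) * Real.exp (-(2*π^2*t*4^n))) := tsum_mul_left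
      _ ≤ (Real.exp 1/(2*π^2*t)) * 4 :=
          mul_le_mul_of_nonneg_left hw4le (by positivity)
      _ = 2*Real.exp 1/(π^2*t) := by field_simp; ring
  -- ===== series 1 =====
  have hx1 : (0:ℝ) < π^2 * t := by positivity
  have hU1 : ∑' k : ℕ, Real.exp (-((k:ℝ)^2 * (π^2 * t))) ≤ 1/(π^2*t) + 1 :=
    my_tsum_sq0_le hx1
  constructor
  · -- lower bound
    obtain ⟨n, h4n_le, h4n_ge⟩ :
        ∃ n : ℕ, (4:ℝ)^n * t ≤ 1 ∧ 1 < (4:ℝ)^(n+1) * t := by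
      have hm1 : 1 ≤ ⌊1/t⌋₊ := by
        apply Nat.le_floor
        rw [Nat.cast_one, le_div_iff₀ ht0]
        linarith
      have hm0 : ⌊1/t⌋₊ ≠ 0 := by omega
      refine ⟨Nat.log 4 ⌊1/t⌋₊, ?_, ?_⟩
      · have h1 := (Nat.cast_le (α := ℝ)).2 (Nat.pow_log_le_self 4 hm0)
        have h2 : (⌊1/t⌋₊ : ℝ) ≤ 1/t := Nat.floor_le (by positivity)
        have h3 : (4:ℝ)^(Nat.log 4 ⌊1/t⌋₊) ≤ 1/t := by push_cast at h1; linarith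
        calc (4:ℝ)^(Nat.log 4 ⌊1/t⌋₊) * t ≤ (1/t) * t :=
              mul_le_mul_of_nonneg_right h3 ht0.le
          _ = 1 := by field_simp
      · have hhigh : ⌊1/t⌋₊ + 1 ≤ 4^(Nat.log 4 ⌊1/t⌋₊ + 1) :=
          Nat.lt_pow_succ_log_self (by norm_num) _
        have h1 := (Nat.cast_le (α := ℝ)).2 hhigh
        have h2 : 1/t < (⌊1/t⌋₊ : ℝ) + 1 := Nat.lt_floor_add_one _
        have h3 : 1/t < (4:ℝ)^(Nat.log 4 ⌊1/t⌋₊ + 1) := by push_cast at h1; linarith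
        calc 1 = (1/t) * t := by field_simp
          _ < (4:ℝ)^(Nat.log 4 ⌊1/t⌋₊ + 1) * t := mul_lt_mul_of_pos_right h3 ht0
    -- f3 n is big
    have hy : (0:ℝ) < 2*(8*π^2*t*4^n) := by positivity
    have hinner_ge : Real.exp (-(16*π^2)) ≤
        ∑' k : ℕ, Real.exp (-(((k:ℝ)+1)^2 * (2*(8*π^2*t*4^n)))) := by
      have hterm : Real.exp (-(16*π^2)) ≤
          Real.exp (-((((0:ℕ):ℝ)+1)^2 * (2*(8*π^2*t*4^n)))) := by
        apply Real.exp_le_exp.2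
        have : 16*π^2*(4^n*t) ≤ 16*π^2*1 :=
          mul_le_mul_of_nonneg_left h4n_le (by positivity)
        push_cast
        nlinarith
      exact hterm.trans (Summable.le_tsum (my_summable_sq hy) 0 (fun j _ => (Real.exp_pos _).le))
    have hmult : (2:ℝ)*4^n ≤ ((2^(n+1) * (2^(n+1) - 1) : ℕ) : ℝ) := by
      have hnat : 2*4^n ≤ (2^(n+1) * (2^(n+1) - 1) : ℕ) := by
        have hp : 1 ≤ 2^n := Nat.one_le_two_pow
        have h2 : (2:ℕ)^(n+1) = 2*2^n := by rw [pow_succ]; ring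
        have h4 : (4:ℕ)^n = 2^n * 2^n := by rw [← Nat.mul_pow]
        calc 2*4^n = 2^(n+1) * 2^n := by rw [h2, h4]; ring
          _ ≤ 2^(n+1) * (2^(n+1) - 1) := Nat.mul_le_mul_left _ (by omega)
      calc (2:ℝ)*4^n = ((2*4^n : ℕ) : ℝ) := by push_cast; ring
        _ ≤ _ := Nat.cast_le.2 hnat
    have hf3big : Real.exp (-(16*π^2))/2/t ≤ f3 n := by
      have step1 : (2*(4:ℝ)^n) * Real.exp (-(16*π^2)) ≤ f3 n := by
        show (2*(4:ℝ)^n) * Real.exp (-(16*π^2)) ≤ ((2^(n+1) * (2^(n+1) - 1) : ℕ) : ℝ) *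
          ∑' k : ℕ, Real.exp (-(((k:ℝ)+1)^2 * (2*(8*π^2*t*4^n))))
        exact mul_le_mul hmult hinner_ge (Real.exp_pos _).le (Nat.cast_nonneg _)
      have h3 : 1/(4*t) ≤ (4:ℝ)^n := by
        rw [div_le_iff₀ (by positivity)]
        have h4 : (4:ℝ)^(n+1) = 4*4^n := by rw [pow_succ]; ring
        nlinarith [h4n_ge]
      have step2 : Real.exp (-(16*π^2))/2/t ≤ (2*(4:ℝ)^n) * Real.exp (-(16*π^2)) := by
        have hE := Real.exp_pos (-(16*π^2))
        calc Real.exp (-(16*π^2))/2/t = 2*(1/(4*t))*Real.exp (-(16*π^2)) := by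
              field_simp; ring
          _ ≤ 2*(4:ℝ)^n*Real.exp (-(16*π^2)) := by nlinarith [h3, hE.le]
          _ = (2*(4:ℝ)^n) * Real.exp (-(16*π^2)) := by ring
      exact step2.trans step1
    have hS3ge : f3 n ≤ ∑' m, f3 m := Summable.le_tsum hf3sum n (fun j _ => hf3nn j)
    rw [hZt]
    have hS1nn : 0 ≤ ∑' k : ℕ, Real.exp (-((k:ℝ)^2 * (π^2 * t))) :=
      tsum_nonneg fun k => (Real.exp_pos _).le
    have hS2nn : 0 ≤ ∑' m, f2 m := tsum_nonneg hf2nn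
    have hS4nn : 0 ≤ ∑' m, f4 m := tsum_nonneg hf4nn
    linarith [hf3big.trans hS3ge]
  · -- upper bound
    rw [hZt]
    have hfin : (1/(π^2*t) + 1) + 5/(π^2*t) + Real.exp 1/(π^2*t) + 2*Real.exp 1/(π^2*t)
        ≤ ((6 + π^2 + 3*Real.exp 1)/π^2)/t := by
      have hsplit : ((6 + π^2 + 3*Real.exp 1)/π^2)/t
          = (6 + 3*Real.exp 1)/(π^2*t) + 1/t := by field_simp; ring
      have hmerge : 1/(π^2*t) + 5/(π^2*t) + Real.exp 1/(π^2*t) + 2*Real.exp 1/(π^2*t)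
          = (6 + 3*Real.exp 1)/(π^2*t) := by ring
      have h1t : 1 ≤ 1/t := by rw [le_div_iff₀ ht0]; linarith
      rw [hsplit]
      linarith [hmerge]
    calc (∑' k : ℕ, Real.exp (-((k:ℝ)^2 * (π^2 * t)))) + (∑' n, f2 n)
          + (∑' n, f3 n) + (∑' n, f4 n)
        ≤ (1/(π^2*t) + 1) + 5/(π^2*t) + Real.exp 1/(π^2*t) + 2*Real.exp 1/(π^2*t) :=
          add_le_add (add_le_add (add_le_add hU1 hU2) hU3) hU4
      _ ≤ ((6 + π^2 + 3*Real.exp 1)/π^2)/t := hfin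
end
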